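/- arXiv:1001.3308 — 5 statements merged into one kernel-verified Lean document; each statement's English description precedes it below -/
import Mathlib

section
/- For any σ > 0, ω > 0, d ∈ ℝ and w ∈ {−1, 1}: (1/(2πi)) ∫_{Im ξ = −wω} exp(i ξ d − σ² ξ²/2) · ξ^{−1} dξ = w · Φ(w d / σ). -/
set_option maxHeartbeats 1000000

open MeasureTheory Real Complex Set Filter

/-- The standard normal cumulative distribution function. -/
noncomputable def stdNormalCDF (x : ℝ) : ℝ :=
  ∫ t in Set.Iic x, (Real.sqrt (2 * Real.pi))⁻¹ * Real.exp (-t ^ 2 / 2)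

lemma my_integrable_cexp_lin (a : ℂ) (ha : a.re < 0) :
    IntegrableOn (fun t : ℝ => Complex.exp (a * t)) (Ioi (0:ℝ)) := by
  apply Integrable.mono' ((exp_neg_integrableOn_Ioi 0 (neg_pos.mpr ha)).congr_fun
    (fun t _ => rfl) measurableSet_Ioi)
  · exact (Complex.continuous_exp.comp (by continuity)).aestronglyMeasurable
  · filter_upwards with t
    simp [Complex.norm_exp, Complex.mul_re]

lemma my_integral_cexp_lin (a : ℂ) (ha : a.re < 0) :
    ∫ t in Ioi (0:ℝ), Complex.exp (a * t) = -a⁻¹ := by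
  have ha0 : a ≠ 0 := fun h => by simp [h] at ha
  have key := integral_Ioi_of_hasDerivAt_of_tendsto
    (f := fun t : ℝ => Complex.exp (a * t) / a) (f' := fun t : ℝ => Complex.exp (a * t))
    (a := 0) (m := 0) ?_ ?_ (my_integrable_cexp_lin a ha) ?_
  · simpa using key
  · exact ((Complex.continuous_exp.comp (by continuity)).div_const a).continuousWithinAt
  · intro x _
    have h1 : HasDerivAt (fun z : ℂ => Complex.exp (a * z) / a) (Complex.exp (a * x)) x := by
      have := ((Complex.hasDerivAt_exp (a * x)).comp (x:ℂ) ((hasDerivAt_id (x:ℂ)).const_mul a)).div_const a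
      simpa [mul_comm, mul_div_assoc, mul_div_cancel_left₀ _ ha0] using this
    exact h1.comp_ofReal
  · rw [tendsto_zero_iff_norm_tendsto_zero]
    have : (fun t : ℝ => ‖Complex.exp (a * t) / a‖) = fun t => Real.exp (a.re * t) / ‖a‖ := by
      ext t; simp [Complex.norm_exp, Complex.mul_re]
    rw [this]
    simpa using (Real.tendsto_exp_atBot.comp
      (tendsto_id.const_mul_atTop_of_neg ha)).div_const ‖a‖

lemma my_gaussian_line (σ ρ s : ℝ) (hσ : 0 < σ) :
    ∫ u : ℝ, Complex.exp (I*(u + ρ*I)*s - σ^2*(u + ρ*I)^2/2)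
      = ((Real.sqrt (2*π)/σ) * Real.exp (-s^2/(2*σ^2)) : ℝ) := by
  have hσ' : (σ:ℂ) ≠ 0 := ofReal_ne_zero.mpr hσ.ne'
  set b : ℂ := -(σ:ℂ)^2/2 with hbdef
  set c : ℂ := I*(s:ℂ) - (σ:ℂ)^2*(ρ:ℂ)*I with hcdef
  set d0 : ℂ := -(ρ:ℂ)*(s:ℂ) + (σ:ℂ)^2*(ρ:ℂ)^2/2 with hd0def
  have hb : b = ((-(σ^2)/2 : ℝ) : ℂ) := by push_cast; ring
  have hbre : b.re < 0 := by
    rw [hb, Complex.ofReal_re]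
    nlinarith [sq_nonneg σ, hσ]
  have h1 : ∀ u : ℝ, I*(u + ρ*I)*s - σ^2*(u + ρ*I)^2/2 = b*(u:ℂ)^2 + c*u + d0 := by
    intro u
    simp only [hbdef, hcdef, hd0def, Complex.I_sq]
    ring_nf
    simp [Complex.I_sq]
    ring
  simp_rw [h1]
  rw [integral_cexp_quadratic hbre c d0]
  have h2 : d0 - c^2/(4*b) = ((-s^2/(2*σ^2) : ℝ) : ℂ) := by
    have hb0 : b ≠ 0 := by rw [hb]; simp; positivity
    rw [hbdef, hcdef, hd0def]
    push_cast
    field_simp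
    ring_nf
    simp [Complex.I_sq]
  have h3 : (↑π / -b) = ((2*π/σ^2 : ℝ):ℂ) := by
    rw [hb]; push_cast; field_simp
  rw [h2, h3]
  rw [show (1/2 : ℂ) = ((1/2 : ℝ):ℂ) by norm_num, ← Complex.ofReal_cpow (by positivity)]
  rw [← Complex.ofReal_exp, ← Complex.ofReal_mul]
  norm_cast
  rw [← Real.sqrt_eq_rpow,
    show 2*π/σ^2 = (Real.sqrt (2*π)/σ)^2 by
      rw [div_pow, Real.sq_sqrt (by positivity)],
    Real.sqrt_sq (by positivity)]

lemma my_shift_Ioi (f : ℝ → ℝ) (a c : ℝ) :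
    ∫ x in Ioi a, f (x + c) = ∫ x in Ioi (a + c), f x := by
  rw [← integral_indicator measurableSet_Ioi, ← integral_indicator measurableSet_Ioi,
      ← integral_add_right_eq_self (Set.indicator (Ioi (a+c)) f) c]
  congr 1; ext x
  simp [Set.indicator_apply, Set.mem_Ioi, add_lt_add_iff_right]

lemma my_T (σ d : ℝ) (hσ : 0 < σ) :
    ∫ t in Ioi (0:ℝ), Real.exp (-(d-t)^2/(2*σ^2))
      = σ * Real.sqrt (2*π) * stdNormalCDF (d/σ) := by
  have h0 : ∀ t : ℝ, Real.exp (-(d-t)^2/(2*σ^2))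
      = (fun x => Real.exp (-(x + -(d/σ))^2/2)) (t * σ⁻¹) := by
    intro t
    simp only
    congr 1
    field_simp
    ring
  simp_rw [h0]
  rw [integral_comp_mul_right_Ioi (fun x => Real.exp (-(x + -(d/σ))^2/2)) 0 (inv_pos.mpr hσ), zero_mul, my_shift_Ioi (fun y => Real.exp (-y^2/2)) 0 (-(d/σ))]
  have heven : ∀ x : ℝ, Real.exp (-x^2/2) = Real.exp (-(-x)^2/2) := by intro x; rw [neg_sq]
  rw [show (0 + -(d/σ)) = -(d/σ) by ring]
  conv_lhs => rw [show (fun x : ℝ => Real.exp (-x^2/2)) = (fun x : ℝ => Real.exp (-(-x)^2/2)) from funext fun x => by rw [neg_sq]]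
  rw [integral_comp_neg_Ioi (-(d/σ)) (fun y => Real.exp (-y^2/2)), neg_neg]
  rw [stdNormalCDF, integral_const_mul, smul_eq_mul, inv_inv, mul_assoc, ← mul_assoc (√(2*π)),
    mul_inv_cancel₀ (show √(2*π) ≠ 0 by positivity), one_mul]


lemma my_alg (ω u : ℝ) (hω : 0 < ω) (C : ℂ) :
    I * (C * (-(-I * ((u:ℂ) - ω*I))⁻¹)) = C / ((u:ℂ) - ω*I) := by
  have hξ : ((u:ℂ) - ω*I) ≠ 0 := by
    intro h; have := congrArg Complex.im h; simp at this; linarith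
  rw [neg_mul, inv_neg, neg_neg, mul_inv, div_eq_mul_inv]
  rw [← mul_assoc, mul_comm I C, mul_assoc, ← mul_assoc I, mul_inv_cancel₀ Complex.I_ne_zero, one_mul]

lemma my_key (σ ω d : ℝ) (hσ : 0 < σ) (hω : 0 < ω) :
    (1 / (2 * ↑π * I)) *
      ∫ u : ℝ, Complex.exp (I * ((u:ℂ) - ω*I) * d - σ^2 * ((u:ℂ) - ω*I)^2/2) / ((u:ℂ) - ω*I)
      = ((stdNormalCDF (d/σ)) : ℂ) := by
  set F : ℝ → ℝ → ℂ := fun u t =>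
    Complex.exp (I * ((u:ℂ) - ω*I) * ((d:ℂ) - t) - σ^2 * ((u:ℂ) - ω*I)^2/2) with hF
  -- Step A : pointwise representation of 1/ξ
  have hξne : ∀ u : ℝ, ((u:ℂ) - ω*I) ≠ 0 := by
    intro u h; have := congrArg Complex.im h; simp at this; linarith
  have stepA : ∀ u : ℝ,
      Complex.exp (I * ((u:ℂ) - ω*I) * d - σ^2 * ((u:ℂ) - ω*I)^2/2) / ((u:ℂ) - ω*I)
        = I * ∫ t in Ioi (0:ℝ), F u t := by
    intro u
    have hsplit : ∀ t : ℝ, F u t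
        = Complex.exp (I * ((u:ℂ) - ω*I) * d - σ^2 * ((u:ℂ) - ω*I)^2/2)
          * Complex.exp ((-I * ((u:ℂ) - ω*I)) * t) := by
      intro t; simp only [hF]; rw [← Complex.exp_add]; congr 1; ring
    have hare : (-I * ((u:ℂ) - ω*I)).re = -ω := by simp
    rw [show (∫ t in Ioi (0:ℝ), F u t)
        = Complex.exp (I * ((u:ℂ) - ω*I) * d - σ^2 * ((u:ℂ) - ω*I)^2/2)
          * ∫ t in Ioi (0:ℝ), Complex.exp ((-I * ((u:ℂ) - ω*I)) * t) by
      simp_rw [hsplit]; rw [MeasureTheory.integral_const_mul]]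
    rw [my_integral_cexp_lin _ (by rw [hare]; linarith), my_alg ω u hω]
  simp_rw [stepA]
  rw [MeasureTheory.integral_const_mul]
  -- Step B : Fubini
  have hnorm : ∀ u t : ℝ, ‖F u t‖
      = Real.exp (ω*d + σ^2*ω^2/2) * Real.exp (-(σ^2/2) * u^2) * Real.exp (-ω*t) := by
    intro u t
    simp only [hF]
    have h : ((u:ℂ) - ω*I)^2 = ((u^2 - ω^2 : ℝ):ℂ) - ((2*u*ω:ℝ):ℂ)*I := by
      push_cast; ring_nf; rw [Complex.I_sq]; ring
    simp only [Complex.norm_exp]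
    rw [← Real.exp_add, ← Real.exp_add]
    congr 1
    rw [h]
    simp [Complex.mul_re, Complex.div_re, Complex.normSq_apply, ← Complex.ofReal_pow]
    ring
  have hFint : Integrable (Function.uncurry F)
      (volume.prod (volume.restrict (Ioi (0:ℝ)))) := by
    apply Integrable.mono'
      (g := fun p : ℝ × ℝ =>
        (Real.exp (ω*d + σ^2*ω^2/2) * Real.exp (-(σ^2/2) * p.1^2)) * Real.exp (-ω*p.2))
    · exact (((integrable_exp_neg_mul_sq (by positivity : (0:ℝ) < σ^2/2)).const_mul
        _).mul_prod (exp_neg_integrableOn_Ioi 0 hω))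
    · apply Continuous.aestronglyMeasurable
      apply Complex.continuous_exp.comp
      fun_prop
    · filter_upwards with p
      rw [Function.uncurry, hnorm p.1 p.2, mul_assoc]
  rw [MeasureTheory.integral_integral_swap hFint]
  -- Step C : inner Gaussian integral
  have stepC : ∀ t : ℝ, (∫ u : ℝ, F u t)
      = ((Real.sqrt (2*π)/σ) * Real.exp (-(d-t)^2/(2*σ^2)) : ℝ) := by
    intro t
    rw [← my_gaussian_line σ (-ω) (d - t) hσ]
    apply MeasureTheory.integral_congr_ae
    filter_upwards with u
    simp only [hF]
    push_cast
    ring_nf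
  simp_rw [stepC]
  -- Step D/E : wrap up
  have hD : (∫ t in Ioi (0:ℝ), ((√(2*π)/σ * rexp (-(d - t)^2/(2*σ^2)) : ℝ) : ℂ))
      = ((∫ t in Ioi (0:ℝ), √(2*π)/σ * rexp (-(d - t)^2/(2*σ^2)) : ℝ) : ℂ) := integral_ofReal
  rw [hD, MeasureTheory.integral_const_mul, my_T σ d hσ]
  have h2π : Real.sqrt (2*π) * Real.sqrt (2*π) = 2*π :=
    Real.mul_self_sqrt (by positivity)
  have hval : (√(2*π)/σ * (σ * √(2*π) * stdNormalCDF (d/σ))) = 2*π*stdNormalCDF (d/σ) := by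
    rw [show √(2*π)/σ * (σ * √(2*π) * stdNormalCDF (d/σ)) = (√(2*π) * √(2*π)) * stdNormalCDF (d/σ) * (σ/σ) by ring,
      h2π, div_self hσ.ne', mul_one]
  rw [hval]
  push_cast
  have h0 : (2*(π:ℂ)*I) ≠ 0 := by simp [Complex.I_ne_zero, Real.pi_ne_zero]
  field_simp

/-- For any σ > 0, ω > 0, d ∈ ℝ and w ∈ {−1, 1}:
(1/(2πi)) ∫_{Im ξ = −wω} exp(i ξ d − σ² ξ²/2) · ξ⁻¹ dξ = w · Φ(w d / σ). -/
theorem stmt1 (σ ω d w : ℝ) (hσ : 0 < σ) (hω : 0 < ω) (hw : w = 1 ∨ w = -1) :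
    (1 / (2 * Real.pi * Complex.I)) *
      ∫ u : ℝ, Complex.exp (Complex.I * (u - (w * ω) * Complex.I) * d
          - σ ^ 2 * (u - (w * ω) * Complex.I) ^ 2 / 2) / (u - (w * ω) * Complex.I)
      = (w : ℂ) * stdNormalCDF (w * d / σ) := by
  rcases hw with rfl | rfl
  · have := my_key σ ω d hσ hω
    rw [show ((1:ℝ):ℂ) * (stdNormalCDF ((1:ℝ) * d / σ) : ℂ) = ((stdNormalCDF (d/σ)) : ℂ) by
      norm_num]
    rw [← this]
    congr 1
    apply MeasureTheory.integral_congr_ae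
    filter_upwards with u
    norm_num
  · have hkey := my_key σ ω (-d) hσ hω
    have hinteq : (∫ u : ℝ, Complex.exp (Complex.I * (u - ((-1:ℝ) * ω) * Complex.I) * d
          - σ ^ 2 * (u - ((-1:ℝ) * ω) * Complex.I) ^ 2 / 2) / (u - ((-1:ℝ) * ω) * Complex.I))
        = -∫ u : ℝ, Complex.exp (I * ((u:ℂ) - ω*I) * (-d:ℝ) - σ^2 * ((u:ℂ) - ω*I)^2/2)
            / ((u:ℂ) - ω*I) := by
      rw [← MeasureTheory.integral_neg, ← integral_neg_eq_self]
      apply MeasureTheory.integral_congr_ae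
      filter_upwards with u
      have h1 : Complex.I * ((-u:ℝ) - ((-1:ℝ) * ω) * Complex.I) * d
          - σ ^ 2 * ((-u:ℝ) - ((-1:ℝ) * ω) * Complex.I) ^ 2 / 2
          = I * ((u:ℂ) - ω*I) * ((-d:ℝ):ℂ) - σ^2 * ((u:ℂ) - ω*I)^2/2 := by
        push_cast; ring
      have h2 : ((-u:ℝ):ℂ) - ((-1:ℝ):ℂ) * (ω:ℂ) * Complex.I = -((u:ℂ) - ω*I) := by
        push_cast; ring
      calc Complex.exp (Complex.I * ((-u:ℝ) - ((-1:ℝ) * ω) * Complex.I) * d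
              - σ ^ 2 * ((-u:ℝ) - ((-1:ℝ) * ω) * Complex.I) ^ 2 / 2)
            / ((-u:ℝ) - ((-1:ℝ) * ω) * Complex.I)
          = Complex.exp (I * ((u:ℂ) - ω*I) * ((-d:ℝ):ℂ) - σ^2 * ((u:ℂ) - ω*I)^2/2)
            / (-((u:ℂ) - ω*I)) := by rw [h1, h2]
        _ = -(Complex.exp (I * ((u:ℂ) - ω*I) * ((-d:ℝ):ℂ) - σ^2 * ((u:ℂ) - ω*I)^2/2)
            / ((u:ℂ) - ω*I)) := by rw [div_neg]
    push_cast at hinteq ⊢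
    rw [hinteq, mul_neg]
    push_cast at hkey
    rw [hkey]
    rw [show ((-1:ℝ) * d / σ) = -d/σ by ring]
    push_cast
    ring
end

section
/- (Contour shift across the pole at the origin.) Let ω₁, ω₂ > 0 and let f be holomorphic on an open set containing the closed strip {ζ ∈ ℂ : −ω₁ ≤ Im ζ ≤ ω₂}. Suppose there is h ∈ L¹(ℝ) with h(u) → 0 as |u| → ∞ such that |f(u + iv)| ≤ h(u) for all u ∈ ℝ and all v ∈ [−ω₁, ω₂]. Then ∫_{Im ξ = −ω₁} f(ξ)/ξ dξ = ∫_{Im ξ = ω₂} f(ξ)/ξ dξ + 2πi f(0). -/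
open MeasureTheory Real Complex Filter

section auxStmt8
open Set Topology


lemma aux_ne_lower (u a : ℝ) (ha : a ≠ 0) : (u : ℂ) - (a : ℂ) * Complex.I ≠ 0 := by
  intro hzero
  have := congrArg Complex.im hzero
  simp at this
  exact ha this

lemma aux_ne_upper (u a : ℝ) (ha : a ≠ 0) : (u : ℂ) + (a : ℂ) * Complex.I ≠ 0 := by
  intro hzero
  have := congrArg Complex.im hzero
  simp at this
  exact ha this

lemma aux_pointwise (u a b : ℝ) (ha : 0 < a) (hb : 0 < b) :
    ((u : ℂ) - a * Complex.I)⁻¹ - ((u : ℂ) + b * Complex.I)⁻¹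
      = ((u * (b^2 - a^2) / ((u^2+a^2)*(u^2+b^2)) : ℝ) : ℂ)
        + ((a/(u^2+a^2) + b/(u^2+b^2) : ℝ) : ℂ) * Complex.I := by
  have h1 := aux_ne_lower u a ha.ne'
  have h2 := aux_ne_upper u b hb.ne'
  have h3 : (u:ℝ)^2 + a^2 ≠ 0 := by positivity
  have h4 : (u:ℝ)^2 + b^2 ≠ 0 := by positivity
  have h3' : ((u:ℂ)^2 + (a:ℂ)^2) ≠ 0 := by
    have : ((u:ℂ)^2 + (a:ℂ)^2) = ((u^2 + a^2 : ℝ) : ℂ) := by push_cast; ring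
    rw [this]; exact_mod_cast h3
  have h4' : ((u:ℂ)^2 + (b:ℂ)^2) ≠ 0 := by
    have : ((u:ℂ)^2 + (b:ℂ)^2) = ((u^2 + b^2 : ℝ) : ℂ) := by push_cast; ring
    rw [this]; exact_mod_cast h4
  push_cast
  rw [inv_sub_inv h1 h2, div_eq_iff (mul_ne_zero h1 h2)]
  field_simp
  ring_nf
  have hI3 : (Complex.I)^3 = -Complex.I := by
    rw [pow_succ, Complex.I_sq]; ring
  simp only [hI3, Complex.I_sq]
  ring

lemma aux_poisson_int (a : ℝ) (ha : 0 < a) : Integrable (fun u : ℝ => a / (u^2 + a^2)) := by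
  have : (fun u : ℝ => a / (u^2 + a^2)) = fun u : ℝ => (1/a) * (1 + (u/a)^2)⁻¹ := by
    funext u; field_simp; ring
  rw [this]
  exact (integrable_inv_one_add_sq.comp_div ha.ne').const_mul _

lemma aux_poisson_val (a : ℝ) (ha : 0 < a) : ∫ u : ℝ, a / (u^2 + a^2) = π := by
  have : (fun u : ℝ => a / (u^2 + a^2)) = fun u : ℝ => (1/a) * (1 + (u/a)^2)⁻¹ := by
    funext u; field_simp; ring
  rw [this, MeasureTheory.integral_const_mul,
    MeasureTheory.Measure.integral_comp_div (fun x : ℝ => (1 + x^2)⁻¹) a,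
    integral_univ_inv_one_add_sq, abs_of_pos ha, smul_eq_mul]
  field_simp

lemma aux_r1_int (a b : ℝ) (ha : 0 < a) (hb : 0 < b) :
    Integrable (fun u : ℝ => u * (b^2 - a^2) / ((u^2+a^2)*(u^2+b^2))) := by
  have hcont : Continuous (fun u : ℝ => u * (b^2 - a^2) / ((u^2+a^2)*(u^2+b^2))) := by
    apply Continuous.div (by continuity) (by continuity)
    intro u
    positivity
  apply Integrable.mono' (((aux_poisson_int b hb).const_mul (|b^2-a^2|/(2*a*b))))
    hcont.aestronglyMeasurable
  filter_upwards with u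
  have hprod : (0:ℝ) < (u^2+a^2)*(u^2+b^2) := by positivity
  rw [Real.norm_eq_abs, abs_div, abs_mul, abs_of_pos hprod, div_le_iff₀ hprod]
  have goalEq : |b^2-a^2|/(2*a*b)*(b/(u^2+b^2))*((u^2+a^2)*(u^2+b^2))
      = |b^2 - a^2| * (u^2+a^2) / (2*a) := by
    field_simp
  rw [goalEq, le_div_iff₀ (by positivity : (0:ℝ) < 2*a)]
  have hu : |u| * (2*a) ≤ u^2 + a^2 := by
    nlinarith [sq_nonneg (|u| - a), _root_.sq_abs u]
  nlinarith [mul_le_mul_of_nonneg_left hu (abs_nonneg (b^2-a^2))]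

lemma aux_inv_integrable (a b : ℝ) (ha : 0 < a) (hb : 0 < b) :
    Integrable (fun u : ℝ => ((u : ℂ) - a * Complex.I)⁻¹ - ((u : ℂ) + b * Complex.I)⁻¹) := by
  have heq : (fun u : ℝ => ((u : ℂ) - a * Complex.I)⁻¹ - ((u : ℂ) + b * Complex.I)⁻¹)
      = fun u : ℝ => ((u * (b^2 - a^2) / ((u^2+a^2)*(u^2+b^2)) : ℝ) : ℂ)
        + ((a/(u^2+a^2) + b/(u^2+b^2) : ℝ) : ℂ) * Complex.I := by
    funext u; exact aux_pointwise u a b ha hb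
  rw [heq]
  apply Integrable.add
  · exact (aux_r1_int a b ha hb).ofReal
  · have hr2 : Integrable (fun u : ℝ => a/(u^2+a^2) + b/(u^2+b^2)) :=
      (aux_poisson_int a ha).add (aux_poisson_int b hb)
    exact (hr2.ofReal).mul_const Complex.I

lemma aux_inv_val (a b : ℝ) (ha : 0 < a) (hb : 0 < b) :
    (∫ u : ℝ, (((u : ℂ) - a * Complex.I)⁻¹ - ((u : ℂ) + b * Complex.I)⁻¹))
      = 2 * π * Complex.I := by
  have heq : (fun u : ℝ => ((u : ℂ) - a * Complex.I)⁻¹ - ((u : ℂ) + b * Complex.I)⁻¹)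
      = fun u : ℝ => ((u * (b^2 - a^2) / ((u^2+a^2)*(u^2+b^2)) : ℝ) : ℂ)
        + ((a/(u^2+a^2) + b/(u^2+b^2) : ℝ) : ℂ) * Complex.I := by
    funext u; exact aux_pointwise u a b ha hb
  have hr2 : Integrable (fun u : ℝ => a/(u^2+a^2) + b/(u^2+b^2)) :=
    (aux_poisson_int a ha).add (aux_poisson_int b hb)
  rw [heq]
  have hadd := MeasureTheory.integral_add ((aux_r1_int a b ha hb).ofReal) ((hr2.ofReal).mul_const Complex.I)
  refine hadd.trans ?_
  rw [MeasureTheory.integral_mul_const]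
  rw [integral_ofReal, integral_ofReal]
  have hodd : (∫ u : ℝ, u * (b^2 - a^2) / ((u^2+a^2)*(u^2+b^2))) = 0 := by
    set r : ℝ → ℝ := fun u => u * (b^2 - a^2) / ((u^2+a^2)*(u^2+b^2)) with hr
    have h1 : (∫ u : ℝ, r ((-1) * u)) = |((-1:ℝ))⁻¹| • ∫ u, r u :=
      MeasureTheory.Measure.integral_comp_mul_left r (-1)
    have h2 : (fun u : ℝ => r ((-1) * u)) = fun u => - r u := by
      funext u; simp only [hr]; ring_nf
    rw [h2] at h1
    rw [integral_neg] at h1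
    norm_num at h1
    linarith
  have hsum : (∫ u : ℝ, (a/(u^2+a^2) + b/(u^2+b^2))) = 2 * π := by
    rw [integral_add (aux_poisson_int a ha) (aux_poisson_int b hb),
      aux_poisson_val a ha, aux_poisson_val b hb]
    ring
  rw [hodd, hsum]
  norm_cast
  ring_nf
  norm_num
  ring_nf

end auxStmt8

section mainStmt8
open Set Topology

/-- Contour shift across the pole at the origin: for `f` holomorphic on a neighbourhood of
the closed strip `−ω₁ ≤ Im ζ ≤ ω₂` and dominated by an integrable function vanishing at
infinity, `∫_{Im ξ = −ω₁} f(ξ)/ξ dξ = ∫_{Im ξ = ω₂} f(ξ)/ξ dξ + 2πi f(0)`. -/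
theorem stmt8 (ω₁ ω₂ : ℝ) (hω₁ : 0 < ω₁) (hω₂ : 0 < ω₂)
    (f : ℂ → ℂ) (U : Set ℂ) (hU : IsOpen U)
    (hUstrip : {ζ : ℂ | -ω₁ ≤ ζ.im ∧ ζ.im ≤ ω₂} ⊆ U)
    (hf : DifferentiableOn ℂ f U)
    (h : ℝ → ℝ) (hint : Integrable h)
    (hvanish : Tendsto h (cocompact ℝ) (nhds 0))
    (hbound : ∀ u v : ℝ, -ω₁ ≤ v → v ≤ ω₂ →
      ‖f ((u : ℂ) + (v : ℂ) * Complex.I)‖ ≤ h u) :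
    (∫ u : ℝ, f ((u : ℂ) - (ω₁ : ℂ) * Complex.I) / ((u : ℂ) - (ω₁ : ℂ) * Complex.I))
      = (∫ u : ℝ, f ((u : ℂ) + (ω₂ : ℂ) * Complex.I) / ((u : ℂ) + (ω₂ : ℂ) * Complex.I))
        + 2 * Real.pi * Complex.I * f 0 := by
  have hmem : ∀ z : ℂ, -ω₁ ≤ z.im → z.im ≤ ω₂ → z ∈ U := fun z h1 h2 => hUstrip ⟨h1, h2⟩
  have h0U : (0 : ℂ) ∈ U := hmem 0 (by simpa using hω₁.le) (by simpa using hω₂.le)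
  set g : ℂ → ℂ := dslope f 0 with hgdef
  have hg : DifferentiableOn ℂ g U :=
    (Complex.differentiableOn_dslope (hU.mem_nhds h0U)).mpr hf
  -- continuity of f and g along the strip
  have hfc : ∀ z : ℂ, -ω₁ ≤ z.im → z.im ≤ ω₂ → ContinuousAt f z := fun z h1 h2 =>
    (hf.differentiableAt (hU.mem_nhds (hmem z h1 h2))).continuousAt
  have hgc : ∀ z : ℂ, -ω₁ ≤ z.im → z.im ≤ ω₂ → ContinuousAt g z := fun z h1 h2 =>
    (hg.differentiableAt (hU.mem_nhds (hmem z h1 h2))).continuousAt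
  -- integrability along horizontal lines
  have hline : ∀ v : ℝ, -ω₁ ≤ v → v ≤ ω₂ → v ≠ 0 →
      Integrable (fun u : ℝ => f ((u : ℂ) + (v : ℂ) * Complex.I) / ((u : ℂ) + (v : ℂ) * Complex.I)) := by
    intro v h1 h2 hv
    have hco : Continuous fun u : ℝ => f ((u : ℂ) + (v : ℂ) * Complex.I) / ((u : ℂ) + (v : ℂ) * Complex.I) := by
      apply Continuous.div
      · apply continuous_iff_continuousAt.mpr
        intro u
        exact (hfc _ (by simpa using h1) (by simpa using h2)).comp (by fun_prop)
      · fun_prop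
      · intro u; exact aux_ne_upper u v hv
    apply Integrable.mono' (hint.div_const |v|) hco.aestronglyMeasurable
    filter_upwards with u
    rw [norm_div]
    have habs : |v| ≤ ‖(u : ℂ) + (v : ℂ) * Complex.I‖ := by
      have := Complex.abs_im_le_norm ((u : ℂ) + (v : ℂ) * Complex.I)
      simpa using this
    have h0 : (0:ℝ) < |v| := abs_pos.mpr hv
    exact div_le_div₀ (le_trans (norm_nonneg _) (hbound u v h1 h2))
      (hbound u v h1 h2) h0 habs
  -- nonvanishing on the two lines
  have hne1 : ∀ u : ℝ, (u : ℂ) + ((-ω₁ : ℝ) : ℂ) * Complex.I ≠ 0 :=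
    fun u => aux_ne_upper u (-ω₁) (by linarith)
  have hne2 : ∀ u : ℝ, (u : ℂ) + ((ω₂ : ℝ) : ℂ) * Complex.I ≠ 0 :=
    fun u => aux_ne_upper u ω₂ (by linarith)
  -- dslope formula off zero
  have hgne : ∀ z : ℂ, z ≠ 0 → g z = f z / z - f 0 * z⁻¹ := by
    intro z hz
    rw [hgdef, dslope_of_ne f hz, slope_def_field]
    rw [sub_zero, sub_div]
    ring
  -- the combined integrand
  set D : ℝ → ℂ := fun u => g ((u : ℂ) + ((-ω₁ : ℝ) : ℂ) * Complex.I)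
      - g ((u : ℂ) + ((ω₂ : ℝ) : ℂ) * Complex.I) with hDdef
  have hDeq : ∀ u : ℝ, D u =
      (f ((u : ℂ) - (ω₁ : ℂ) * Complex.I) / ((u : ℂ) - (ω₁ : ℂ) * Complex.I)
        - f ((u : ℂ) + (ω₂ : ℂ) * Complex.I) / ((u : ℂ) + (ω₂ : ℂ) * Complex.I))
      - f 0 * (((u : ℂ) - (ω₁ : ℂ) * Complex.I)⁻¹ - ((u : ℂ) + (ω₂ : ℂ) * Complex.I)⁻¹) := by
    intro u
    have e1 : (u : ℂ) + ((-ω₁ : ℝ) : ℂ) * Complex.I = (u : ℂ) - (ω₁ : ℂ) * Complex.I := by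
      push_cast; ring
    rw [hDdef]
    simp only []
    rw [e1, hgne _ (e1 ▸ hne1 u), hgne _ (hne2 u)]
    ring
  -- integrability of the two line integrands
  have hA : Integrable (fun u : ℝ => f ((u : ℂ) - (ω₁ : ℂ) * Complex.I) / ((u : ℂ) - (ω₁ : ℂ) * Complex.I)) := by
    have := hline (-ω₁) le_rfl (by linarith) (by linarith)
    simpa only [Complex.ofReal_neg, neg_mul, ← sub_eq_add_neg] using this
  have hB : Integrable (fun u : ℝ => f ((u : ℂ) + (ω₂ : ℂ) * Complex.I) / ((u : ℂ) + (ω₂ : ℂ) * Complex.I)) :=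
    hline ω₂ (by linarith) le_rfl (by linarith)
  have hInvInt := aux_inv_integrable ω₁ ω₂ hω₁ hω₂
  have hDint : Integrable D := by
    have : D = fun u : ℝ =>
        (f ((u : ℂ) - (ω₁ : ℂ) * Complex.I) / ((u : ℂ) - (ω₁ : ℂ) * Complex.I)
          - f ((u : ℂ) + (ω₂ : ℂ) * Complex.I) / ((u : ℂ) + (ω₂ : ℂ) * Complex.I))
        - f 0 * (((u : ℂ) - (ω₁ : ℂ) * Complex.I)⁻¹ - ((u : ℂ) + (ω₂ : ℂ) * Complex.I)⁻¹) :=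
      funext hDeq
    rw [this]
    exact (hA.sub hB).sub (hInvInt.const_mul (f 0))
  -- continuity of g along horizontal lines in the strip
  have hgcl : ∀ v : ℝ, -ω₁ ≤ v → v ≤ ω₂ → Continuous fun x : ℝ => g ((x : ℂ) + (v : ℂ) * Complex.I) := by
    intro v h1 h2
    apply continuous_iff_continuousAt.mpr
    intro x
    exact (hgc _ (by simpa using h1) (by simpa using h2)).comp (by fun_prop)
  -- the rectangle identity
  have hrect : ∀ R : ℝ, (∫ x in -R..R, D x)
      = Complex.I • (∫ y in -ω₁..ω₂, g (((-R : ℝ) : ℂ) + (y : ℂ) * Complex.I))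
        - Complex.I • (∫ y in -ω₁..ω₂, g ((R : ℂ) + (y : ℂ) * Complex.I)) := by
    intro R
    have key := Complex.integral_boundary_rect_eq_zero_of_differentiableOn g
      ((-R : ℂ) + ((-ω₁ : ℝ) : ℂ) * Complex.I) ((R : ℂ) + ((ω₂ : ℝ) : ℂ) * Complex.I) ?_
    · have key2 : (∫ x in -R..R, g ((x:ℂ) + ((-ω₁:ℝ):ℂ) * Complex.I))
          - (∫ x in -R..R, g ((x:ℂ) + ((ω₂:ℝ):ℂ) * Complex.I)) +
          Complex.I • (∫ y in -ω₁..ω₂, g ((R:ℂ) + (y:ℂ) * Complex.I)) -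
          Complex.I • (∫ y in -ω₁..ω₂, g (((-R:ℝ):ℂ) + (y:ℂ) * Complex.I)) = 0 := by
        simpa using key
      have hsub : (∫ x in -R..R, D x)
          = (∫ x in -R..R, g ((x:ℂ) + ((-ω₁:ℝ):ℂ) * Complex.I))
            - (∫ x in -R..R, g ((x:ℂ) + ((ω₂:ℝ):ℂ) * Complex.I)) := by
        rw [hDdef, intervalIntegral.integral_sub
          ((hgcl (-ω₁) le_rfl (by linarith)).intervalIntegrable _ _)
          ((hgcl ω₂ (by linarith) le_rfl).intervalIntegrable _ _)]
      rw [hsub]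
      linear_combination key2
    · apply hg.mono
      intro ζ hζ
      simp only [Complex.mem_reProdIm] at hζ
      have h2 := hζ.2
      simp at h2
      rw [Set.uIcc_of_le (by linarith : -ω₁ ≤ ω₂)] at h2
      exact hmem ζ h2.1 h2.2
  -- vertical side integrals tend to zero
  have hvert : ∀ s : ℝ → ℝ, (∀ᶠ R in atTop, |s R| = R) →
      Tendsto (fun R => h (s R)) atTop (𝓝 0) →
      Tendsto (fun R : ℝ => Complex.I • ∫ y in -ω₁..ω₂, g (((s R : ℝ) : ℂ) + (y : ℂ) * Complex.I))
        atTop (𝓝 0) := by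
    intro s habs hts
    have hGlim : Tendsto (fun R : ℝ => (h (s R) + ‖f 0‖) * (ω₁ + ω₂) * R⁻¹)
        atTop (𝓝 ((0 + ‖f 0‖) * (ω₁ + ω₂) * 0)) :=
      ((hts.add_const _).mul_const _).mul tendsto_inv_atTop_zero
    rw [show ((0:ℝ) + ‖f 0‖) * (ω₁ + ω₂) * 0 = 0 by ring] at hGlim
    apply squeeze_zero_norm' _ hGlim
    filter_upwards [eventually_ge_atTop (1:ℝ), habs] with R hR1 hRabs
    have hRpos : (0:ℝ) < R := by linarith
    have hbnd : ∀ y ∈ Set.uIoc (-ω₁) ω₂,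
        ‖g (((s R : ℝ) : ℂ) + (y : ℂ) * Complex.I)‖ ≤ (h (s R) + ‖f 0‖) / R := by
      intro y hy
      rw [Set.uIoc_of_le (by linarith : -ω₁ ≤ ω₂)] at hy
      set z : ℂ := ((s R : ℝ) : ℂ) + (y : ℂ) * Complex.I with hz
      have hzre : z.re = s R := by simp [hz]
      have hzne : z ≠ 0 := by
        intro h0
        have : z.re = 0 := by rw [h0]; simp
        rw [hzre] at this
        rw [this] at hRabs
        simp at hRabs
        linarith
      have hnum : ‖f z - f 0‖ ≤ h (s R) + ‖f 0‖ := by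
        refine (norm_sub_le _ _).trans ?_
        have := hbound (s R) y hy.1.le hy.2
        exact add_le_add this le_rfl
      have hden : R ≤ ‖z‖ := by
        have := Complex.abs_re_le_norm z
        rw [hzre, hRabs] at this
        exact this
      rw [hgne z hzne]
      have : f z / z - f 0 * z⁻¹ = (f z - f 0) / z := by
        field_simp
      rw [this, norm_div]
      have h0le : 0 ≤ h (s R) :=
        (norm_nonneg _).trans (hbound (s R) 0 (by linarith) hω₂.le)
      exact div_le_div₀ (add_nonneg h0le (norm_nonneg _)) hnum hRpos hden
    have hIle := intervalIntegral.norm_integral_le_of_norm_le_const hbnd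
    rw [norm_smul, Complex.norm_I, one_mul]
    refine hIle.trans ?_
    rw [show |ω₂ - (-ω₁)| = ω₁ + ω₂ by rw [abs_of_pos (by linarith)]; ring]
    rw [div_eq_mul_inv]
    exact le_of_eq (by ring)
  -- limits
  have hle_top : (atTop : Filter ℝ) ≤ cocompact ℝ := by
    rw [cocompact_eq_atBot_atTop]; exact le_sup_right
  have hle_bot : (atBot : Filter ℝ) ≤ cocompact ℝ := by
    rw [cocompact_eq_atBot_atTop]; exact le_sup_left
  have hvR := hvert (fun R => R)
    (by filter_upwards [eventually_ge_atTop (0:ℝ)] with R hR; exact abs_of_nonneg hR)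
    (hvanish.comp (tendsto_id.mono_right hle_top))
  have hvL := hvert (fun R => -R)
    (by filter_upwards [eventually_ge_atTop (0:ℝ)] with R hR; rw [abs_neg]; exact abs_of_nonneg hR)
    (hvanish.comp (tendsto_neg_atTop_atBot.mono_right hle_bot))
  have hT2 : Tendsto (fun R : ℝ => ∫ x in -R..R, D x) atTop (𝓝 0) := by
    have := hvL.sub hvR
    rw [sub_zero] at this
    exact this.congr (fun R => (hrect R).symm)
  have hT1 : Tendsto (fun R : ℝ => ∫ x in -R..R, D x) atTop (𝓝 (∫ x, D x)) :=
    intervalIntegral_tendsto_integral hDint tendsto_neg_atTop_atBot tendsto_id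
  have hDzero : (∫ x, D x) = 0 := tendsto_nhds_unique hT1 hT2
  -- assemble
  have hInvVal := aux_inv_val ω₁ ω₂ hω₁ hω₂
  have hsplit : (∫ x, D x)
      = ((∫ u : ℝ, f ((u : ℂ) - (ω₁ : ℂ) * Complex.I) / ((u : ℂ) - (ω₁ : ℂ) * Complex.I))
        - (∫ u : ℝ, f ((u : ℂ) + (ω₂ : ℂ) * Complex.I) / ((u : ℂ) + (ω₂ : ℂ) * Complex.I)))
        - f 0 * (2 * ↑π * Complex.I) := by
    calc (∫ x, D x)
        = ∫ u : ℝ, ((f ((u : ℂ) - (ω₁ : ℂ) * Complex.I) / ((u : ℂ) - (ω₁ : ℂ) * Complex.I)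
            - f ((u : ℂ) + (ω₂ : ℂ) * Complex.I) / ((u : ℂ) + (ω₂ : ℂ) * Complex.I))
          - f 0 * (((u : ℂ) - (ω₁ : ℂ) * Complex.I)⁻¹ - ((u : ℂ) + (ω₂ : ℂ) * Complex.I)⁻¹)) := by
          rw [show D = (fun u : ℝ =>
            (f ((u : ℂ) - (ω₁ : ℂ) * Complex.I) / ((u : ℂ) - (ω₁ : ℂ) * Complex.I)
              - f ((u : ℂ) + (ω₂ : ℂ) * Complex.I) / ((u : ℂ) + (ω₂ : ℂ) * Complex.I))
            - f 0 * (((u : ℂ) - (ω₁ : ℂ) * Complex.I)⁻¹ - ((u : ℂ) + (ω₂ : ℂ) * Complex.I)⁻¹))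
            from funext hDeq]
      _ = ((∫ u : ℝ, f ((u : ℂ) - (ω₁ : ℂ) * Complex.I) / ((u : ℂ) - (ω₁ : ℂ) * Complex.I))
            - (∫ u : ℝ, f ((u : ℂ) + (ω₂ : ℂ) * Complex.I) / ((u : ℂ) + (ω₂ : ℂ) * Complex.I)))
          - f 0 * (2 * ↑π * Complex.I) := by
          have hAB : Integrable (fun u : ℝ =>
              f ((u : ℂ) - (ω₁ : ℂ) * Complex.I) / ((u : ℂ) - (ω₁ : ℂ) * Complex.I)
                - f ((u : ℂ) + (ω₂ : ℂ) * Complex.I) / ((u : ℂ) + (ω₂ : ℂ) * Complex.I)) :=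
            hA.sub hB
          have hCI : Integrable (fun u : ℝ =>
              f 0 * (((u : ℂ) - (ω₁ : ℂ) * Complex.I)⁻¹ - ((u : ℂ) + (ω₂ : ℂ) * Complex.I)⁻¹)) :=
            hInvInt.const_mul (f 0)
          rw [MeasureTheory.integral_sub hAB hCI,
            MeasureTheory.integral_sub hA hB, MeasureTheory.integral_const_mul, hInvVal]
  rw [hDzero] at hsplit
  linear_combination -hsplit

end mainStmt8
end

section
/- (Gaussian reduction of the forward-start price.) Let σ > 0, r ∈ ℝ, τ > 0, S > 0, w ∈ {−1, 1} and ω₁, ω₂ > 0. Then (S/(2πi)) · ( ∫_{Im ξ = −wω₂} e^{i(r + σ²/2)τξ − τσ²ξ²/2}/ξ dξ − e^{−rτ} ∫_{Im ξ = −wω₁} e^{i(r − σ²/2)τξ − τσ²ξ²/2}/ξ dξ ) = w S ( Φ(w(r/σ + σ/2)√τ) − e^{−rτ} Φ(w(r/σ − σ/2)√τ) ). -/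
open MeasureTheory Real Complex Set

lemma norm_cexp' (z : ℂ) : ‖Complex.exp z‖ = Real.exp z.re := by
  rw [Complex.norm_exp]

lemma integral_cexp_Ioi {l : ℂ} (h : l.re < 0) :
    ∫ s in Ioi (0:ℝ), Complex.exp (l * s) = -1 / l := by
  have hl : l ≠ 0 := fun h0 => by simp [h0] at h
  have hcont : Continuous fun s : ℝ => Complex.exp (l * s) / l := by
    apply Continuous.div_const; apply Complex.continuous_exp.comp; continuity
  have hnorm : ∀ s : ℝ, ‖Complex.exp (l * s)‖ = Real.exp (-(-l.re) * s) := by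
    intro s; rw [norm_cexp']; norm_num [Complex.mul_re]
  have hint : IntegrableOn (fun s : ℝ => Complex.exp (l * s)) (Ioi 0) := by
    refine (integrable_norm_iff ?_).mp ?_
    · exact ((Complex.continuous_exp.comp (by continuity)).aestronglyMeasurable)
    · refine (exp_neg_integrableOn_Ioi 0 (by linarith : (0:ℝ) < -l.re)).congr_fun ?_ measurableSet_Ioi
      exact fun s _ => (hnorm s).symm
  have key := integral_Ioi_of_hasDerivAt_of_tendsto
    (f := fun s : ℝ => Complex.exp (l * s) / l) (f' := fun s : ℝ => Complex.exp (l * s))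
    (a := 0) (m := 0) hcont.continuousWithinAt ?_ hint ?_
  · rw [key]; simp; ring
  · intro x _
    have h1 : HasDerivAt (fun s : ℝ => l * (s:ℂ)) l x := by
      simpa using (Complex.ofRealCLM.hasDerivAt (x := x)).const_mul l
    have : HasDerivAt (fun s : ℝ => Complex.exp (l * s)) (Complex.exp (l * x) * l) x := by
      simpa [mul_comm] using h1.cexp
    simpa [mul_div_cancel_right₀ _ hl] using this.div_const l
  · rw [show (0:ℂ) = 0 / l by simp]
    apply Filter.Tendsto.div_const
    rw [tendsto_zero_iff_norm_tendsto_zero]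
    have : ∀ s : ℝ, ‖Complex.exp (l * s)‖ = Real.exp (l.re * s) := by
      intro s; rw [norm_cexp']; norm_num [Complex.mul_re]
    simp_rw [this]
    exact Real.tendsto_exp_atBot.comp (Filter.Tendsto.const_mul_atTop_of_neg h Filter.tendsto_id)

lemma gauss_shift {c : ℝ} (hc : 0 < c) (β d : ℂ) :
    ∫ u : ℝ, Complex.exp (β * (u + d) - c * (u + d) ^ 2 / 2)
      = (Real.sqrt (2 * Real.pi / c) : ℂ) * Complex.exp (β ^ 2 / (2 * c)) := by
  have hc' : (c : ℂ) ≠ 0 := by exact_mod_cast hc.ne'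
  have hb : (-(c:ℂ)/2).re < 0 := by
    rw [show (-(c:ℂ)/2) = ((-c/2 : ℝ):ℂ) by push_cast; ring, Complex.ofReal_re]
    linarith
  have h1 : ∀ u : ℝ, β * (u + d) - c * (u + d) ^ 2 / 2
      = (-(c:ℂ)/2) * u^2 + (β - c*d) * u + (β*d - c*d^2/2) := by
    intro u; ring
  simp_rw [h1]
  rw [integral_cexp_quadratic hb]
  congr 1
  · rw [show ((π:ℂ) / -(-(c:ℂ)/2)) = ((2*π/c : ℝ) : ℂ) by push_cast; field_simp]
    rw [Real.sqrt_eq_rpow, Complex.ofReal_cpow (by positivity)]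
    norm_num
  · congr 1
    field_simp
    ring

lemma stdNormalCDF_eq (x : ℝ) :
    stdNormalCDF x = (Real.sqrt (2 * Real.pi))⁻¹ * ∫ t in Set.Iic x, Real.exp (-t ^ 2 / 2) := by
  rw [stdNormalCDF, integral_const_mul]

lemma halfGauss {c : ℝ} (hc : 0 < c) (b : ℝ) :
    ∫ s in Ioi (0:ℝ), Real.exp (-(b - s)^2/(2*c))
      = Real.sqrt c * Real.sqrt (2*Real.pi) * stdNormalCDF (b / Real.sqrt c) := by
  have hsc : 0 < Real.sqrt c := Real.sqrt_pos.mpr hc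
  set F : ℝ → ℝ := (Ioi (0:ℝ)).indicator (fun s => Real.exp (-(b - s)^2/(2*c))) with hF
  have h0 : ∫ s in Ioi (0:ℝ), Real.exp (-(b - s)^2/(2*c)) = ∫ s, F s := by
    rw [hF, integral_indicator measurableSet_Ioi]
  have h1 : ∀ x : ℝ, F (Real.sqrt c * x + b)
      = (Ioi (-(b / Real.sqrt c))).indicator (fun x => Real.exp (-x^2/2)) x := by
    intro x
    have hmem : (Real.sqrt c * x + b ∈ Ioi (0:ℝ)) ↔ (x ∈ Ioi (-(b / Real.sqrt c))) := by
      simp only [mem_Ioi]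
      rw [neg_lt, lt_div_iff₀ hsc]
      constructor <;> intro h <;> nlinarith
    by_cases hx : x ∈ Ioi (-(b / Real.sqrt c))
    · rw [indicator_of_mem hx, hF, indicator_of_mem (hmem.mpr hx)]
      have : (b - (Real.sqrt c * x + b))^2 = c * x^2 := by
        have := Real.sq_sqrt hc.le
        nlinarith [Real.sq_sqrt hc.le]
      rw [this]
      congr 1
      field_simp
    · rw [indicator_of_notMem hx, hF, indicator_of_notMem (fun h => hx (hmem.mp h))]
  have h2 : ∫ x, F (Real.sqrt c * x + b) = (Real.sqrt c)⁻¹ * ∫ s, F s := by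
    have ht := integral_add_right_eq_self (μ := volume) (fun y => F y) b
    rw [← ht]
    have hm := MeasureTheory.Measure.integral_comp_mul_left (fun y => F (y + b)) (Real.sqrt c)
    rw [hm, abs_of_pos (inv_pos.mpr hsc)]
    simp [smul_eq_mul]
  have h3 : ∫ x, F (Real.sqrt c * x + b) = ∫ x in Iic (b / Real.sqrt c), Real.exp (-x^2/2) := by
    simp_rw [h1]
    rw [integral_indicator measurableSet_Ioi]
    rw [← integral_comp_neg_Iic]
    congr 1
    ext x
    ring_nf
  rw [h0, ← mul_inv_cancel_left₀ hsc.ne' (∫ s, F s)]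
  rw [← h2, h3, stdNormalCDF_eq]
  have h4 : 0 < Real.sqrt (2*Real.pi) := Real.sqrt_pos.mpr (by positivity)
  field_simp

lemma gauss_eq : ∀ t : ℝ, Real.exp (-t^2/2) = Real.exp (-(1/2) * t^2) := by
  intro t; congr 1; ring

lemma integrable_gauss : Integrable (fun t : ℝ => Real.exp (-t^2/2)) := by
  simp_rw [gauss_eq]
  exact integrable_exp_neg_mul_sq (by norm_num)

lemma stdNormalCDF_neg (x : ℝ) : stdNormalCDF (-x) = 1 - stdNormalCDF x := by
  have h4 : 0 < Real.sqrt (2*Real.pi) := Real.sqrt_pos.mpr (by positivity)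
  have htot : ∫ t : ℝ, Real.exp (-t^2/2) = Real.sqrt (2*Real.pi) := by
    simp_rw [gauss_eq]
    rw [integral_gaussian]
    congr 1
    rw [div_div_eq_mul_div, div_one, mul_comm]
  have hsplit := intervalIntegral.integral_Iic_add_Ioi (μ := volume) (b := x)
    (f := fun t : ℝ => Real.exp (-t^2/2)) integrable_gauss.integrableOn integrable_gauss.integrableOn
  have hneg : ∫ t in Iic (-x), Real.exp (-t^2/2) = ∫ t in Ioi x, Real.exp (-t^2/2) := by
    rw [show (Ioi x) = Ioi (-(-x)) by ring_nf, ← integral_comp_neg_Iic]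
    congr 1; ext t; ring_nf
  rw [stdNormalCDF_eq, stdNormalCDF_eq, hneg]
  rw [htot] at hsplit
  rw [eq_sub_iff_add_eq, ← mul_add, add_comm, hsplit, inv_mul_cancel₀ h4.ne']

lemma key {a b c : ℝ} (ha : 0 < a) (hc : 0 < c) :
    ∫ u : ℝ, Complex.exp (I*(b:ℂ)*((u:ℂ) - a*I) - c*((u:ℂ) - a*I)^2/2) / ((u:ℂ) - a*I)
      = 2*(π:ℂ)*I * (stdNormalCDF (b / Real.sqrt c) : ℝ) := by
  have hξ : ∀ u : ℝ, ((u:ℂ) - a*I) ≠ 0 := by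
    intro u h
    have := congrArg Complex.im h
    simp at this
    linarith
  have hre : ∀ u : ℝ, (-I*((u:ℂ) - a*I)).re < 0 := by
    intro u
    simp [Complex.mul_re]
    linarith
  -- pointwise identity
  have hpt : ∀ u : ℝ,
      Complex.exp (I*(b:ℂ)*((u:ℂ) - a*I) - c*((u:ℂ) - a*I)^2/2) / ((u:ℂ) - a*I)
        = ∫ s in Ioi (0:ℝ), I * Complex.exp (I*((b:ℂ)-s)*((u:ℂ) - a*I) - c*((u:ℂ) - a*I)^2/2) := by
    intro u
    have hfac : ∀ s : ℝ, I * Complex.exp (I*((b:ℂ)-s)*((u:ℂ) - a*I) - c*((u:ℂ) - a*I)^2/2)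
        = (I * Complex.exp (I*(b:ℂ)*((u:ℂ) - a*I) - c*((u:ℂ) - a*I)^2/2))
            * Complex.exp ((-I*((u:ℂ) - a*I))*s) := by
      intro s
      conv_rhs => rw [mul_assoc, ← Complex.exp_add]
      congr 1
      ring
    simp_rw [hfac]
    rw [MeasureTheory.integral_const_mul, integral_cexp_Ioi (hre u)]
    have hIinv : I * (-1/(-I*((u:ℂ) - a*I))) = 1/((u:ℂ) - a*I) := by
      have := hξ u
      field_simp
    rw [show I * Complex.exp (I*(b:ℂ)*((u:ℂ) - a*I) - c*((u:ℂ) - a*I)^2/2) * (-1/(-I*((u:ℂ) - a*I)))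
        = Complex.exp (I*(b:ℂ)*((u:ℂ) - a*I) - c*((u:ℂ) - a*I)^2/2) * (I * (-1/(-I*((u:ℂ) - a*I)))) from by ring,
      hIinv, mul_one_div]
  simp_rw [hpt]
  -- Fubini
  have hswap : (∫ u : ℝ, ∫ s in Ioi (0:ℝ),
        I * Complex.exp (I*((b:ℂ)-s)*((u:ℂ) - a*I) - c*((u:ℂ) - a*I)^2/2))
      = ∫ s in Ioi (0:ℝ), ∫ u : ℝ,
        I * Complex.exp (I*((b:ℂ)-s)*((u:ℂ) - a*I) - c*((u:ℂ) - a*I)^2/2) := by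
    apply MeasureTheory.integral_integral_swap
    have hmeas : AEStronglyMeasurable (Function.uncurry fun (u s : ℝ) =>
        I * Complex.exp (I*((b:ℂ)-s)*((u:ℂ) - a*I) - c*((u:ℂ) - a*I)^2/2))
        ((volume : Measure ℝ).prod ((volume : Measure ℝ).restrict (Ioi 0))) := by
      apply Continuous.aestronglyMeasurable
      apply Continuous.mul continuous_const
      apply Complex.continuous_exp.comp
      apply Continuous.sub
      · apply Continuous.mul
        · exact (continuous_const.mul ((continuous_const.sub
            (Complex.continuous_ofReal.comp continuous_snd))))
        · exact (Complex.continuous_ofReal.comp continuous_fst).sub continuous_const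
      · apply Continuous.div_const
        exact continuous_const.mul
          (((Complex.continuous_ofReal.comp continuous_fst).sub continuous_const).pow 2)
    have hboundInt : Integrable (fun p : ℝ × ℝ =>
        Real.exp (b*a + c*a^2/2) * (Real.exp (-(c/2) * p.1^2) * Real.exp (-a * p.2)))
        ((volume : Measure ℝ).prod ((volume : Measure ℝ).restrict (Ioi 0))) := by
      apply Integrable.const_mul
      exact Integrable.mul_prod (integrable_exp_neg_mul_sq (by linarith))
        (exp_neg_integrableOn_Ioi 0 ha)
    refine hboundInt.mono' hmeas ?_
    filter_upwards with p
    rw [Function.uncurry]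
    simp only [norm_mul, Complex.norm_I, one_mul, Complex.norm_exp]
    have hre2 : (I*((b:ℂ)-p.2)*((p.1:ℂ) - a*I) - c*((p.1:ℂ) - a*I)^2/2).re
        = (b*a + c*a^2/2) + (-(c/2) * p.1^2 + -a * p.2) := by
      rw [show I*((b:ℂ)-p.2)*((p.1:ℂ) - a*I) - c*((p.1:ℂ) - a*I)^2/2
          = ((((b*a + c*a^2/2) + (-(c/2)*p.1^2 + -a*p.2)) : ℝ) : ℂ)
            + (((b - p.2)*p.1 + c*p.1*a : ℝ) : ℂ) * I from by
        push_cast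
        ring_nf
        simp [Complex.I_sq]
        ring]
      simp [← Complex.ofReal_pow]
    exact le_of_eq (by rw [hre2]; simp [Real.exp_add])
  rw [hswap]
  -- inner integral
  have hinner : ∀ s : ℝ,
      (∫ u : ℝ, I * Complex.exp (I*((b:ℂ)-s)*((u:ℂ) - a*I) - c*((u:ℂ) - a*I)^2/2))
        = I * (Real.sqrt (2*Real.pi/c) : ℂ) * ((Real.exp (-(b-s)^2/(2*c)) : ℝ) : ℂ) := by
    intro s
    rw [MeasureTheory.integral_const_mul]
    have h1 : ∀ u : ℝ, I*((b:ℂ)-s)*((u:ℂ) - a*I) - c*((u:ℂ) - a*I)^2/2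
        = (I*((b:ℂ)-s))*((u:ℂ) + (-(a:ℂ)*I)) - c*((u:ℂ) + (-(a:ℂ)*I))^2/2 := by
      intro u; ring
    simp_rw [h1]
    rw [gauss_shift hc (I*((b:ℂ)-s)) (-(a:ℂ)*I)]
    rw [mul_assoc]
    congr 2
    rw [show (I*((b:ℂ)-s))^2/(2*(c:ℂ)) = ((-(b-s)^2/(2*c) : ℝ) : ℂ) by
      push_cast; rw [mul_pow, Complex.I_sq]; ring]
    exact (Complex.ofReal_exp _).symm
  simp_rw [hinner]
  have hor : (∫ s in Ioi (0:ℝ), ((Real.exp (-(b-s)^2/(2*c)) : ℝ):ℂ))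
      = ((∫ s in Ioi (0:ℝ), Real.exp (-(b-s)^2/(2*c)) : ℝ):ℂ) := integral_ofReal (𝕜 := ℂ)
  rw [MeasureTheory.integral_const_mul, hor, halfGauss hc b]
  have : Real.sqrt (2*Real.pi/c) * (Real.sqrt c * Real.sqrt (2*Real.pi) * stdNormalCDF (b / Real.sqrt c))
      = 2*Real.pi * stdNormalCDF (b / Real.sqrt c) := by
    rw [show Real.sqrt (2*Real.pi/c) * (Real.sqrt c * Real.sqrt (2*Real.pi) * stdNormalCDF (b / Real.sqrt c))
        = (Real.sqrt (2*Real.pi/c) * Real.sqrt c) * Real.sqrt (2*Real.pi) * stdNormalCDF (b / Real.sqrt c) by ring]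
    rw [← Real.sqrt_mul (by positivity), div_mul_cancel₀ _ hc.ne', Real.mul_self_sqrt (by positivity)]
  calc I * ((Real.sqrt (2*Real.pi/c)):ℂ) * ((Real.sqrt c * Real.sqrt (2*Real.pi) * stdNormalCDF (b / Real.sqrt c) : ℝ):ℂ)
      = I * (((Real.sqrt (2*Real.pi/c) * (Real.sqrt c * Real.sqrt (2*Real.pi) * stdNormalCDF (b / Real.sqrt c))) : ℝ) : ℂ) := by
        push_cast; ring
    _ = I * (((2*Real.pi * stdNormalCDF (b / Real.sqrt c)) : ℝ) : ℂ) := by rw [this]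
    _ = 2*(π:ℂ)*I * (stdNormalCDF (b / Real.sqrt c) : ℝ) := by push_cast; ring

lemma key_neg {a b c : ℝ} (ha : 0 < a) (hc : 0 < c) :
    ∫ u : ℝ, Complex.exp (I*(b:ℂ)*((u:ℂ) + a*I) - c*((u:ℂ) + a*I)^2/2) / ((u:ℂ) + a*I)
      = 2*(π:ℂ)*I * ((stdNormalCDF (b / Real.sqrt c) : ℝ) - 1) := by
  have h1 : ∀ u : ℝ, Complex.exp (I*(b:ℂ)*((u:ℂ) + a*I) - c*((u:ℂ) + a*I)^2/2) / ((u:ℂ) + a*I)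
      = -(Complex.exp (I*((-b : ℝ):ℂ)*(((-u : ℝ):ℂ) - a*I) - c*(((-u : ℝ):ℂ) - a*I)^2/2)
          / (((-u : ℝ):ℂ) - a*I)) := by
    intro u
    have e1 : ((-u:ℝ):ℂ) - (a:ℂ)*I = -((u:ℂ) + a*I) := by push_cast; ring
    rw [e1, div_neg, neg_neg]
    congr 2
    push_cast
    ring
  simp_rw [h1]
  rw [integral_neg, MeasureTheory.integral_neg_eq_self (fun v : ℝ =>
    Complex.exp (I*((-b : ℝ):ℂ)*((v:ℂ) - a*I) - c*((v:ℂ) - a*I)^2/2) / ((v:ℂ) - a*I)) volume]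
  rw [key ha hc, show (-b) / Real.sqrt c = -(b / Real.sqrt c) by ring, stdNormalCDF_neg]
  push_cast
  ring

lemma b_over_sqrt (r' σ τ : ℝ) (hσ : 0 < σ) (hτ : 0 < τ) :
    ((r'/σ + σ/2) * Real.sqrt τ * σ * Real.sqrt τ) = (r' + σ^2/2) * τ := by
  have h : Real.sqrt τ * Real.sqrt τ = τ := Real.mul_self_sqrt hτ.le
  rw [show (r'/σ + σ/2) * Real.sqrt τ * σ * Real.sqrt τ
      = ((r'/σ + σ/2)*σ) * (Real.sqrt τ * Real.sqrt τ) by ring, h]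
  field_simp

lemma sqrt_tc (σ τ : ℝ) (hσ : 0 < σ) (hτ : 0 < τ) :
    Real.sqrt (τ * σ^2) = σ * Real.sqrt τ := by
  rw [Real.sqrt_mul hτ.le, Real.sqrt_sq hσ.le]
  ring

lemma arg_eq (r' σ τ : ℝ) (hσ : 0 < σ) (hτ : 0 < τ) :
    ((r' + σ^2/2) * τ) / Real.sqrt (τ * σ^2) = (r'/σ + σ/2) * Real.sqrt τ := by
  rw [sqrt_tc σ τ hσ hτ, div_eq_iff (by positivity)]
  rw [show (r'/σ + σ/2) * Real.sqrt τ * (σ * Real.sqrt τ)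
      = (r'/σ + σ/2) * Real.sqrt τ * σ * Real.sqrt τ by ring]
  exact (b_over_sqrt r' σ τ hσ hτ).symm

/-- Gaussian reduction of the forward-start price. -/
theorem stmt12 (σ r τ S w ω₁ ω₂ : ℝ) (hσ : 0 < σ) (hτ : 0 < τ) (hS : 0 < S)
    (hw : w = 1 ∨ w = -1) (hω₁ : 0 < ω₁) (hω₂ : 0 < ω₂) :
    ((S : ℂ) / (2 * Real.pi * Complex.I)) *
      ((∫ u : ℝ, Complex.exp (Complex.I * ((r : ℝ) + σ ^ 2 / 2) * τ * (u - (w * ω₂) * Complex.I)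
            - τ * σ ^ 2 * (u - (w * ω₂) * Complex.I) ^ 2 / 2) / (u - (w * ω₂) * Complex.I))
        - Real.exp (-r * τ) *
          ∫ u : ℝ, Complex.exp (Complex.I * ((r : ℝ) - σ ^ 2 / 2) * τ * (u - (w * ω₁) * Complex.I)
            - τ * σ ^ 2 * (u - (w * ω₁) * Complex.I) ^ 2 / 2) / (u - (w * ω₁) * Complex.I))
      = (w : ℂ) * S * (stdNormalCDF (w * (r / σ + σ / 2) * Real.sqrt τ)
          - Real.exp (-r * τ) * stdNormalCDF (w * (r / σ - σ / 2) * Real.sqrt τ)) := by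
  have hc : 0 < τ * σ^2 := by positivity
  have hπI : (2 * (π:ℂ) * I) ≠ 0 := by
    simp [Complex.I_ne_zero, Real.pi_ne_zero]
  have harg2 : ((r + σ^2/2) * τ) / Real.sqrt (τ * σ^2) = (r/σ + σ/2) * Real.sqrt τ :=
    arg_eq r σ τ hσ hτ
  have harg1 : ((r - σ^2/2) * τ) / Real.sqrt (τ * σ^2) = (r/σ - σ/2) * Real.sqrt τ := by
    have := arg_eq (r - σ^2) σ τ hσ hτ
    rw [show r - σ^2 + σ^2/2 = r - σ^2/2 by ring] at this
    rw [this, show (r - σ^2)/σ + σ/2 = r/σ - σ/2 by field_simp; ring]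
  rcases hw with hw | hw <;> subst hw
  · -- w = 1
    have e2 : (∫ u : ℝ, Complex.exp (Complex.I * ((r : ℝ) + σ ^ 2 / 2) * τ * (u - ((1:ℝ) * ω₂) * Complex.I)
            - τ * σ ^ 2 * (u - ((1:ℝ) * ω₂) * Complex.I) ^ 2 / 2) / (u - ((1:ℝ) * ω₂) * Complex.I))
        = 2*(π:ℂ)*I * (stdNormalCDF (((r + σ^2/2) * τ) / Real.sqrt (τ * σ^2)) : ℝ) := by
      rw [← key hω₂ hc]
      congr 1
      ext u
      have : ((1:ℝ) * ω₂ : ℝ) = ω₂ := one_mul ω₂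
      push_cast
      ring_nf
    have e1 : (∫ u : ℝ, Complex.exp (Complex.I * ((r : ℝ) - σ ^ 2 / 2) * τ * (u - ((1:ℝ) * ω₁) * Complex.I)
            - τ * σ ^ 2 * (u - ((1:ℝ) * ω₁) * Complex.I) ^ 2 / 2) / (u - ((1:ℝ) * ω₁) * Complex.I))
        = 2*(π:ℂ)*I * (stdNormalCDF (((r - σ^2/2) * τ) / Real.sqrt (τ * σ^2)) : ℝ) := by
      rw [← key hω₁ hc]
      congr 1
      ext u
      push_cast
      ring_nf
    rw [e1, e2, harg1, harg2]
    push_cast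
    field_simp
  · -- w = -1
    have e2 : (∫ u : ℝ, Complex.exp (Complex.I * ((r : ℝ) + σ ^ 2 / 2) * τ * (u - ((-1:ℝ) * ω₂) * Complex.I)
            - τ * σ ^ 2 * (u - ((-1:ℝ) * ω₂) * Complex.I) ^ 2 / 2) / (u - ((-1:ℝ) * ω₂) * Complex.I))
        = 2*(π:ℂ)*I * ((stdNormalCDF (((r + σ^2/2) * τ) / Real.sqrt (τ * σ^2)) : ℝ) - 1) := by
      rw [← key_neg hω₂ hc]
      congr 1
      ext u
      push_cast
      ring_nf
    have e1 : (∫ u : ℝ, Complex.exp (Complex.I * ((r : ℝ) - σ ^ 2 / 2) * τ * (u - ((-1:ℝ) * ω₁) * Complex.I)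
            - τ * σ ^ 2 * (u - ((-1:ℝ) * ω₁) * Complex.I) ^ 2 / 2) / (u - ((-1:ℝ) * ω₁) * Complex.I))
        = 2*(π:ℂ)*I * ((stdNormalCDF (((r - σ^2/2) * τ) / Real.sqrt (τ * σ^2)) : ℝ) - 1) := by
      rw [← key_neg hω₁ hc]
      congr 1
      ext u
      push_cast
      ring_nf
    rw [e1, e2, harg1, harg2]
    rw [show (-1 : ℝ) * (r/σ + σ/2) * Real.sqrt τ = -((r/σ + σ/2) * Real.sqrt τ) by ring,
        show (-1 : ℝ) * (r/σ - σ/2) * Real.sqrt τ = -((r/σ - σ/2) * Real.sqrt τ) by ring,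
        stdNormalCDF_neg, stdNormalCDF_neg]
    push_cast
    field_simp
    ring
end

section
/- (Gaussian reduction of the Asian-type contour integral to a Black–Scholes-type formula.) Let m ∈ ℝ, v > 0, w ∈ {−1, 1}, and let ω satisfy ω > 1 if w = 1 and ω > 0 if w = −1. Then −(1/(2π)) ∫_{Im ξ = −wω} exp(i ξ m − v² ξ²/2) / (ξ(ξ + i)) dξ = w ( e^{m + v²/2} Φ(w(m + v²)/v) − Φ(w m / v) ). In particular, with m = ln(S/K) + (1/2)(r − σ²/2)(T − T′) and v² = σ²(T − T′)(2M − 1)/(6M) (for S, K > 0, σ > 0, r ∈ ℝ, T > T′, M ≥ 1), the discretely monitored geometric Asian price integral −(K e^{−r(T−t)}/(2π)) ∫_{Im ξ = −wω} e^{iξm − v²ξ²/2}/(ξ(ξ+i)) dξ equals w ( S e^{−β} Φ(w D⁺) − K e^{−r(T−t)} Φ(w D⁻) ), where D⁻ = m/v, D⁺ = D⁻ + v and β = r(T − t) − (r − σ²/2 + σ²(2M−1)/(6M))(T − T′)/2. -/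
open MeasureTheory Real Complex
open Set Filter

/-- The Asian-type contour integral `∫_{Im ξ = −wω} e^{iξm − v²ξ²/2}/(ξ(ξ+i)) dξ`. -/
noncomputable def asianIntegral (w ω m v : ℝ) : ℂ :=
  ∫ u : ℝ, Complex.exp (Complex.I * ((u : ℂ) - (w * ω : ℝ) * Complex.I) * (m : ℂ)
      - (v : ℂ) ^ 2 * ((u : ℂ) - (w * ω : ℝ) * Complex.I) ^ 2 / 2)
    / (((u : ℂ) - (w * ω : ℝ) * Complex.I) *
        (((u : ℂ) - (w * ω : ℝ) * Complex.I) + Complex.I))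

noncomputable def Exqu (v ρ m : ℝ) (u : ℝ) : ℂ :=
  Complex.I * ((u:ℂ) + (ρ:ℂ)*Complex.I) * m - (v:ℂ)^2 * ((u:ℂ)+(ρ:ℂ)*Complex.I)^2 / 2

lemma my_integral_ofReal {f : ℝ → ℝ} {μ : MeasureTheory.Measure ℝ} :
    ∫ x, ((f x : ℝ) : ℂ) ∂μ = ((∫ x, f x ∂μ : ℝ) : ℂ) := integral_ofReal


lemma my_exp_Ioi (z : ℂ) (hz : 0 < z.re) :
    ∫ t in Ioi (0:ℝ), Complex.exp (-(z * t)) = 1 / z := by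
  have hz0 : z ≠ 0 := fun h => by simp [h] at hz
  have hd : ∀ x ∈ Ici (0:ℝ), HasDerivAt (fun t : ℝ => -(Complex.exp (-(z * t)) / z))
      (Complex.exp (-(z * x))) x := by
    intro x _
    have h1 : HasDerivAt (fun w : ℂ => -(Complex.exp (-(z * w)) / z)) (Complex.exp (-(z * x))) x := by
      have h2 : HasDerivAt (fun w : ℂ => -(z * w)) (-z) (x : ℂ) := by
        have := ((hasDerivAt_id (x:ℂ)).const_mul z).neg
        rw [mul_one] at this
        exact this
      have h3 := (Complex.hasDerivAt_exp (-(z * (x:ℂ)))).comp (x:ℂ) h2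
      have h4 := (h3.div_const z).neg
      have e : Complex.exp (-(z * x)) = -(Complex.exp (-(z * x)) * -z / z) := by field_simp
      rw [e]; exact h4
    exact h1.comp_ofReal
  have hint : IntegrableOn (fun t : ℝ => Complex.exp (-(z * t))) (Ioi 0) := by
    apply Integrable.mono' ((exp_neg_integrableOn_Ioi 0 hz).norm)
    · exact (Continuous.aestronglyMeasurable (by continuity)).restrict
    · filter_upwards with t
      simp only [Complex.norm_exp, Real.norm_eq_abs, neg_re, mul_re,
        ofReal_re, ofReal_im, mul_zero, sub_zero]
      rw [_root_.abs_of_nonneg (Real.exp_nonneg _), neg_mul]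
  have ht : Tendsto (fun t : ℝ => -(Complex.exp (-(z * t)) / z)) atTop (nhds 0) := by
    rw [tendsto_zero_iff_norm_tendsto_zero]
    have heq : (fun t : ℝ => ‖-(Complex.exp (-(z * t)) / z)‖) = fun t => Real.exp (-(z.re * t)) / ‖z‖ := by
      funext t
      simp [Complex.norm_exp]
    rw [heq]
    rw [show (0:ℝ) = 0 / ‖z‖ by simp]
    apply Tendsto.div_const
    apply Real.tendsto_exp_atBot.comp
    exact tendsto_neg_atBot_iff.mpr (tendsto_id.const_mul_atTop hz)
  have := integral_Ioi_of_hasDerivAt_of_tendsto' hd hint ht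
  rw [this]
  simp

lemma gauss_contour (v ρ y : ℝ) (hv : 0 < v) :
    ∫ u : ℝ, Complex.exp (Complex.I * ((u:ℂ) + (ρ:ℂ) * Complex.I) * y
        - (v:ℂ)^2 * ((u:ℂ) + (ρ:ℂ) * Complex.I)^2 / 2)
      = ((Real.sqrt (2 * Real.pi) / v) * Real.exp (-y^2 / (2 * v^2)) : ℝ) := by
  have hb : (-(v:ℂ)^2/2).re < 0 := by
    have : (-(v:ℂ)^2/2) = ((-(v^2)/2 : ℝ) : ℂ) := by push_cast; ring
    rw [this, Complex.ofReal_re]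
    nlinarith
  have key := integral_cexp_quadratic hb (Complex.I * ((y:ℂ) - (v:ℂ)^2 * ρ))
    ((-(ρ*y) + v^2*ρ^2/2 : ℝ) : ℂ)
  have heq : ∀ u : ℝ, Complex.I * ((u:ℂ) + (ρ:ℂ) * Complex.I) * y
      - (v:ℂ)^2 * ((u:ℂ) + (ρ:ℂ) * Complex.I)^2 / 2
      = (-(v:ℂ)^2/2) * (u:ℂ)^2 + (Complex.I * ((y:ℂ) - (v:ℂ)^2 * ρ)) * u
        + ((-(ρ*y) + v^2*ρ^2/2 : ℝ) : ℂ) := by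
    intro u
    have h2 : (Complex.I)^2 = -1 := Complex.I_sq
    push_cast
    ring_nf
    rw [h2]
    ring
  simp_rw [heq]
  rw [key]
  have h1 : ((Real.pi : ℂ) / -(-(v:ℂ)^2/2)) = ((2 * Real.pi / v^2 : ℝ) : ℂ) := by
    push_cast
    field_simp
  have h2 : ((2 * Real.pi / v^2 : ℝ) : ℂ) ^ (1/2 : ℂ) = ((Real.sqrt (2*Real.pi) / v : ℝ) : ℂ) := by
    rw [show ((1:ℂ)/2) = ((1/2 : ℝ) : ℂ) by norm_num]
    rw [← Complex.ofReal_cpow (by positivity)]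
    congr 1
    rw [← Real.sqrt_eq_rpow, Real.sqrt_div (by positivity) (v^2), Real.sqrt_sq hv.le]
  have h3 : ((-(ρ*y) + v^2*ρ^2/2 : ℝ) : ℂ)
        - (Complex.I * ((y:ℂ) - (v:ℂ)^2 * ρ))^2 / (4 * (-(v:ℂ)^2/2))
      = ((-y^2/(2*v^2) : ℝ) : ℂ) := by
    have h2' : (Complex.I)^2 = -1 := Complex.I_sq
    have hv2 : (v:ℂ)^2 ≠ 0 := by
      norm_cast
      positivity
    have hv1 : (v:ℂ) ≠ 0 := by exact_mod_cast hv.ne'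
    push_cast
    field_simp
    ring_nf
    rw [h2']
    ring
  rw [h1, h2, h3, ← Complex.ofReal_exp, ← Complex.ofReal_mul]

lemma integral_Iic_add_right (f : ℝ → ℝ) (c b : ℝ) :
    ∫ x in Iic c, f (x + b) = ∫ x in Iic (c + b), f x := by
  have A : MeasurableEmbedding (fun x : ℝ => x + b) :=
    (Homeomorph.addRight b).isClosedEmbedding.measurableEmbedding
  have h := A.setIntegral_map (μ := volume) f (Iic (c + b))
  rw [map_add_right_eq_self volume b] at h
  rw [h]
  congr 1
  ext x
  simp [add_le_add_iff_right]

lemma gauss_Ioi_cdf (v a : ℝ) (hv : 0 < v) :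
    ∫ t in Ioi (0:ℝ), Real.exp (-(t - a)^2 / (2*v^2))
      = v * Real.sqrt (2*Real.pi) * stdNormalCDF (a/v) := by
  have h1 : ∫ t in Ioi (0:ℝ), Real.exp (-(t - a)^2 / (2*v^2))
      = v * ∫ x in Ioi (0:ℝ), Real.exp (-(x - a/v)^2 / 2) := by
    have key := integral_comp_mul_left_Ioi
      (fun t => Real.exp (-(t - a)^2 / (2*v^2))) 0 hv
    simp only [mul_zero, smul_eq_mul] at key
    have : ∀ x : ℝ, Real.exp (-(v * x - a)^2 / (2*v^2)) = Real.exp (-(x - a/v)^2 / 2) := by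
      intro x
      congr 1
      field_simp
    simp_rw [this] at key
    rw [key]
    field_simp
  have h2 : ∫ x in Ioi (0:ℝ), Real.exp (-(x - a/v)^2 / 2)
      = ∫ x in Iic (0:ℝ), Real.exp (-(x + a/v)^2 / 2) := by
    have key := integral_comp_neg_Iic 0 (fun x => Real.exp (-(x - a/v)^2 / 2))
    simp only [neg_zero] at key
    rw [← key]
    congr 1
    funext x
    congr 2
    ring
  have h3 : ∫ x in Iic (0:ℝ), Real.exp (-(x + a/v)^2 / 2)
      = ∫ x in Iic (a/v), Real.exp (-x^2 / 2) := by
    rw [integral_Iic_add_right (fun x => Real.exp (-x^2/2)) 0 (a/v), zero_add]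
  have h4 : stdNormalCDF (a/v) = (Real.sqrt (2*Real.pi))⁻¹ * ∫ x in Iic (a/v), Real.exp (-x^2/2) := by
    rw [stdNormalCDF, integral_const_mul]
  rw [h1, h2, h3, h4]
  rw [← mul_assoc]
  have : Real.sqrt (2*Real.pi) ≠ 0 := by positivity
  field_simp

lemma pole_integral (m v ρ c : ℝ) (hv : 0 < v) (hρc : ρ + c < 0) :
    ∫ u : ℝ, Complex.exp (Exqu v ρ m u) / ((u:ℂ) + (ρ:ℂ)*Complex.I + (c:ℂ)*Complex.I)
      = 2 * Real.pi * Complex.I *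
          ((Real.exp (c*m + c^2*v^2/2) * stdNormalCDF ((m + c*v^2)/v) : ℝ) : ℂ) := by
  have hI2 : (Complex.I)^2 = -1 := Complex.I_sq
  set F : ℝ → ℝ → ℂ := fun u t => Complex.I * Complex.exp (Exqu v ρ m u
      - (Complex.I * ((u:ℂ) + (ρ:ℂ)*Complex.I + (c:ℂ)*Complex.I)) * t) with hF
  have hzre : ∀ u : ℝ, (Complex.I * ((u:ℂ) + (ρ:ℂ)*Complex.I + (c:ℂ)*Complex.I)).re = -(ρ+c) := by
    intro u; simp
  have hden : ∀ u : ℝ, ((u:ℂ) + (ρ:ℂ)*Complex.I + (c:ℂ)*Complex.I) ≠ 0 := by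
    intro u h
    have h2 : ((u:ℂ) + (ρ:ℂ)*Complex.I + (c:ℂ)*Complex.I).im = ρ + c := by simp
    rw [h] at h2
    simp at h2
    linarith
  -- step 1: pointwise representation
  have hpt : ∀ u : ℝ, Complex.exp (Exqu v ρ m u) / ((u:ℂ) + (ρ:ℂ)*Complex.I + (c:ℂ)*Complex.I)
      = ∫ t in Ioi (0:ℝ), F u t := by
    intro u
    have h1 : ∫ t in Ioi (0:ℝ), F u t
        = Complex.I * Complex.exp (Exqu v ρ m u) * ∫ t in Ioi (0:ℝ),
            Complex.exp (-(Complex.I * ((u:ℂ) + (ρ:ℂ)*Complex.I + (c:ℂ)*Complex.I) * t)) := by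
      rw [← integral_const_mul]
      congr 1
      funext t
      rw [hF, mul_assoc, ← Complex.exp_add]
      congr 2
      try ring
    rw [h1, my_exp_Ioi _ (by rw [hzre]; linarith)]
    field_simp [hden u]
    try ring

  simp_rw [hpt]
  -- step 2: Fubini
  have hre : ∀ u t : ℝ, (Exqu v ρ m u
      - (Complex.I * ((u:ℂ) + (ρ:ℂ)*Complex.I + (c:ℂ)*Complex.I)) * t).re
      = (-(ρ*m) + v^2*ρ^2/2) - v^2/2*u^2 + (ρ+c)*t := by
    intro u t
    have key : Exqu v ρ m u
        - (Complex.I * ((u:ℂ) + (ρ:ℂ)*Complex.I + (c:ℂ)*Complex.I)) * t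
        = Complex.ofReal ((-(ρ*m) + v^2*ρ^2/2) - v^2/2*u^2 + (ρ+c)*t)
          + Complex.ofReal (u*m - v^2*u*ρ - u*t) * Complex.I := by
      rw [Exqu]
      push_cast
      ring_nf
      rw [hI2]
      ring
    rw [key, Complex.add_re, Complex.ofReal_re, Complex.mul_I_re, Complex.ofReal_im]
    ring
  have hintF : Integrable (Function.uncurry F) (volume.prod (volume.restrict (Ioi 0))) := by
    have hcont : Continuous (Function.uncurry F) := by
      rw [hF]
      apply Continuous.mul continuous_const
      apply Complex.continuous_exp.comp
      unfold Exqu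
      fun_prop
    apply Integrable.mono' (g := fun p : ℝ × ℝ =>
      (Real.exp (-(ρ*m) + v^2*ρ^2/2) * Real.exp (-(v^2/2) * p.1^2)) * Real.exp ((ρ+c) * p.2)) ?_ hcont.aestronglyMeasurable
    · filter_upwards with p
      calc ‖Function.uncurry F p‖ = Real.exp ((Exqu v ρ m p.1
          - (Complex.I * ((p.1:ℂ) + (ρ:ℂ)*Complex.I + (c:ℂ)*Complex.I)) * p.2).re) := by
            rw [hF]
            simp [Function.uncurry, Complex.norm_exp]
        _ ≤ _ := by
            rw [hre]
            rw [← Real.exp_add, ← Real.exp_add]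
            apply le_of_eq
            congr 1
            ring
    · exact Integrable.mul_prod
        ((integrable_exp_neg_mul_sq (by positivity : (0:ℝ) < v^2/2)).const_mul _)
        (by simpa [IntegrableOn] using exp_neg_integrableOn_Ioi 0 (by linarith : (0:ℝ) < -(ρ+c)))
  rw [integral_integral_swap hintF]
  -- inner integral over u
  have hinner : ∀ t : ℝ, (∫ u : ℝ, F u t)
      = Complex.I * Complex.exp ((c*t : ℝ) : ℂ) *
        ((Real.sqrt (2*Real.pi)/v * Real.exp (-(m-t)^2/(2*v^2)) : ℝ) : ℂ) := by
    intro t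
    have h1 : ∀ u : ℝ, F u t = (Complex.I * Complex.exp ((c*t:ℝ):ℂ)) *
        Complex.exp (Complex.I * ((u:ℂ) + (ρ:ℂ) * Complex.I) * ((m - t : ℝ) : ℂ)
          - (v:ℂ)^2 * ((u:ℂ) + (ρ:ℂ) * Complex.I)^2 / 2) := by
      intro u
      rw [hF]
      simp only
      conv_rhs => rw [mul_assoc, ← Complex.exp_add]
      congr 1
      unfold Exqu
      push_cast
      ring_nf
      rw [hI2]
      ring
    simp_rw [h1]
    rw [integral_const_mul, gauss_contour v ρ (m - t) hv]
  simp_rw [hinner]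
  have h2 : ∀ t : ℝ, Complex.I * Complex.exp ((c*t : ℝ) : ℂ) *
        ((Real.sqrt (2*Real.pi)/v * Real.exp (-(m-t)^2/(2*v^2)) : ℝ) : ℂ)
      = Complex.I * ((Real.exp (c*t) * (Real.sqrt (2*Real.pi)/v * Real.exp (-(m-t)^2/(2*v^2))) : ℝ) : ℂ) := by
    intro t
    rw [← Complex.ofReal_exp]
    push_cast
    ring
  simp_rw [h2]
  rw [integral_const_mul, my_integral_ofReal]
  -- the real integral
  have h3 : ∀ t : ℝ, Real.exp (c*t) * (Real.sqrt (2*Real.pi)/v * Real.exp (-(m-t)^2/(2*v^2)))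
      = (Real.sqrt (2*Real.pi)/v * Real.exp (c*m + c^2*v^2/2)) *
          Real.exp (-(t - (m + c*v^2))^2/(2*v^2)) := by
    intro t
    rw [mul_comm (Real.exp (c*t)), mul_assoc, ← Real.exp_add, mul_assoc, ← Real.exp_add]
    congr 2
    field_simp
    ring
  simp_rw [h3]
  rw [integral_const_mul, gauss_Ioi_cdf v (m + c*v^2) hv]
  have hs : Real.sqrt (2*Real.pi) * Real.sqrt (2*Real.pi) = 2*Real.pi :=
    Real.mul_self_sqrt (by positivity)
  have hvne : v ≠ 0 := hv.ne'
  have hr : Real.sqrt (2*Real.pi)/v * Real.exp (c*m + c^2*v^2/2) *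
        (v * Real.sqrt (2*Real.pi) * stdNormalCDF ((m + c*v^2)/v))
      = 2*Real.pi * (Real.exp (c*m + c^2*v^2/2) * stdNormalCDF ((m + c*v^2)/v)) := by
    rw [show Real.sqrt (2*Real.pi)/v * Real.exp (c*m + c^2*v^2/2) *
        (v * Real.sqrt (2*Real.pi) * stdNormalCDF ((m + c*v^2)/v))
      = (Real.sqrt (2*Real.pi) * Real.sqrt (2*Real.pi)) *
        (Real.exp (c*m + c^2*v^2/2) * stdNormalCDF ((m + c*v^2)/v)) * (v/v) from by ring]
    rw [div_self hvne, hs, mul_one]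
  rw [hr]
  push_cast
  ring

lemma pole_integral' (m v ρ c : ℝ) (hv : 0 < v) (hρc : 0 < ρ + c) :
    ∫ u : ℝ, Complex.exp (Exqu v ρ m u) / ((u:ℂ) + (ρ:ℂ)*Complex.I + (c:ℂ)*Complex.I)
      = -(2 * Real.pi * Complex.I) *
          ((Real.exp (c*m + c^2*v^2/2) * stdNormalCDF (-((m + c*v^2)/v)) : ℝ) : ℂ) := by
  have key : ∀ u : ℝ, Complex.exp (Exqu v ρ m (-u)) / (((-u : ℝ):ℂ) + (ρ:ℂ)*Complex.I + (c:ℂ)*Complex.I)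
      = -(Complex.exp (Exqu v (-ρ) (-m) u) / ((u:ℂ) + ((-ρ:ℝ):ℂ)*Complex.I + ((-c:ℝ):ℂ)*Complex.I)) := by
    intro u
    have h1 : (((-u : ℝ):ℂ) + (ρ:ℂ)*Complex.I + (c:ℂ)*Complex.I)
        = -((u:ℂ) + ((-ρ:ℝ):ℂ)*Complex.I + ((-c:ℝ):ℂ)*Complex.I) := by
      push_cast; ring
    have h2 : Exqu v ρ m (-u) = Exqu v (-ρ) (-m) u := by
      unfold Exqu; push_cast; ring
    rw [h1, h2, div_neg]
  have hswap : ∫ u : ℝ, Complex.exp (Exqu v ρ m u) / ((u:ℂ) + (ρ:ℂ)*Complex.I + (c:ℂ)*Complex.I)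
      = ∫ u : ℝ, Complex.exp (Exqu v ρ m (-u)) / (((-u : ℝ):ℂ) + (ρ:ℂ)*Complex.I + (c:ℂ)*Complex.I) := by
    rw [← integral_neg_eq_self]
  rw [hswap]
  simp_rw [key]
  rw [integral_neg, pole_integral (-m) v (-ρ) (-c) hv (by linarith)]
  have e1 : (-c)*(-m) + (-c)^2*v^2/2 = c*m + c^2*v^2/2 := by ring
  have e2 : (-m + (-c)*v^2)/v = -((m + c*v^2)/v) := by ring
  rw [e1, e2]
  ring


lemma Exqu_re (v ρ m u : ℝ) :
    (Exqu v ρ m u).re = -(ρ*m) + v^2*ρ^2/2 - v^2/2*u^2 := by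
  have key : Exqu v ρ m u
      = Complex.ofReal (-(ρ*m) + v^2*ρ^2/2 - v^2/2*u^2)
        + Complex.ofReal (u*m - v^2*u*ρ) * Complex.I := by
    rw [Exqu]
    have hI2 : (Complex.I)^2 = -1 := Complex.I_sq
    push_cast
    ring_nf
    rw [hI2]
    ring
  rw [key, Complex.add_re, Complex.ofReal_re, Complex.mul_I_re, Complex.ofReal_im]
  ring

lemma integrable_pole (m v ρ c : ℝ) (hv : 0 < v) (h : ρ + c ≠ 0) :
    Integrable (fun u : ℝ => Complex.exp (Exqu v ρ m u)
      / ((u:ℂ) + (ρ:ℂ)*Complex.I + (c:ℂ)*Complex.I)) := by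
  have hden : ∀ u : ℝ, ((u:ℂ) + (ρ:ℂ)*Complex.I + (c:ℂ)*Complex.I) ≠ 0 := by
    intro u hu
    have h2 : ((u:ℂ) + (ρ:ℂ)*Complex.I + (c:ℂ)*Complex.I).im = ρ + c := by simp
    rw [hu] at h2
    simp at h2
    exact h h2.symm
  apply Integrable.mono' (g := fun u : ℝ =>
    (Real.exp (-(ρ*m) + v^2*ρ^2/2) / |ρ + c|) * Real.exp (-(v^2/2) * u^2))
  · exact ((integrable_exp_neg_mul_sq (by positivity : (0:ℝ) < v^2/2)).const_mul _)
  · apply Continuous.aestronglyMeasurable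
    apply Continuous.div
    · apply Complex.continuous_exp.comp
      unfold Exqu
      fun_prop
    · fun_prop
    · exact hden
  · filter_upwards with u
    rw [norm_div]
    have h1 : ‖Complex.exp (Exqu v ρ m u)‖ = Real.exp (-(ρ*m) + v^2*ρ^2/2 - v^2/2*u^2) := by
      rw [Complex.norm_exp, Exqu_re]
    have h2 : |ρ + c| ≤ ‖(u:ℂ) + (ρ:ℂ)*Complex.I + (c:ℂ)*Complex.I‖ := by
      have := Complex.abs_im_le_norm ((u:ℂ) + (ρ:ℂ)*Complex.I + (c:ℂ)*Complex.I)
      simpa using this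
    have h3 : (0:ℝ) < |ρ + c| := abs_pos.mpr h
    calc ‖Complex.exp (Exqu v ρ m u)‖ / ‖(u:ℂ) + (ρ:ℂ)*Complex.I + (c:ℂ)*Complex.I‖
        ≤ ‖Complex.exp (Exqu v ρ m u)‖ / |ρ + c| := by
          apply div_le_div_of_nonneg_left (norm_nonneg _) h3 h2
      _ = Real.exp (-(ρ*m) + v^2*ρ^2/2) / |ρ + c| * Real.exp (-(v^2/2) * u^2) := by
          rw [h1]
          conv_rhs => rw [div_mul_eq_mul_div, ← Real.exp_add]
          congr 2
          ring

lemma pole_integral_w (w : ℝ) (hw : w = 1 ∨ w = -1) (m v ρ c : ℝ) (hv : 0 < v)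
    (h : w * (ρ + c) < 0) :
    ∫ u : ℝ, Complex.exp (Exqu v ρ m u) / ((u:ℂ) + (ρ:ℂ)*Complex.I + (c:ℂ)*Complex.I)
      = (w:ℂ) * (2 * Real.pi * Complex.I) *
          ((Real.exp (c*m + c^2*v^2/2) * stdNormalCDF (w * (m + c*v^2)/v) : ℝ) : ℂ) := by
  rcases hw with h1 | h1 <;> subst h1
  · rw [pole_integral m v ρ c hv (by linarith)]
    norm_num
  · rw [pole_integral' m v ρ c hv (by linarith)]
    rw [show (-1 : ℝ) * (m + c*v^2)/v = -((m + c*v^2)/v) by ring]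
    push_cast
    ring

lemma part1 (w ω : ℝ) (hw : w = 1 ∨ w = -1)
    (hω₁ : w = 1 → 1 < ω) (hω₂ : w = -1 → 0 < ω) (m v : ℝ) (hv : 0 < v) :
    -(1 / (2 * Real.pi)) * asianIntegral w ω m v
      = (w : ℂ) * (Real.exp (m + v ^ 2 / 2) * stdNormalCDF (w * (m + v ^ 2) / v)
          - stdNormalCDF (w * m / v)) := by
  have hI2 : (Complex.I)^2 = -1 := Complex.I_sq
  set ρ : ℝ := -(w * ω) with hρdef
  have hρ0 : w * (ρ + 0) < 0 := by
    rcases hw with h | h <;> subst h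
    · have := hω₁ rfl; simp [hρdef]; linarith
    · have := hω₂ rfl; simp [hρdef]; linarith
  have hρ1 : w * (ρ + 1) < 0 := by
    rcases hw with h | h <;> subst h
    · have := hω₁ rfl; simp [hρdef]; linarith
    · have := hω₂ rfl; simp [hρdef]; nlinarith
  have hwne : w ≠ 0 := by rcases hw with h | h <;> subst h <;> norm_num
  have hρne0 : ρ + 0 ≠ 0 := by
    intro hc; rw [hc] at hρ0; simp at hρ0
  have hρne1 : ρ + 1 ≠ 0 := by
    intro hc; rw [hc] at hρ1; simp at hρ1
  -- rewrite the integrand in terms of Exqu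
  have hxi : ∀ u : ℝ, (u:ℂ) - ((w * ω : ℝ):ℂ) * Complex.I = (u:ℂ) + (ρ:ℂ) * Complex.I := by
    intro u; rw [hρdef]; push_cast; ring
  have hden0 : ∀ u : ℝ, (u:ℂ) + (ρ:ℂ)*Complex.I ≠ 0 := by
    intro u hu
    have h2 : ((u:ℂ) + (ρ:ℂ)*Complex.I).im = ρ := by simp
    rw [hu] at h2; simp at h2; rw [← h2] at hρne0; simp at hρne0
  have hden1 : ∀ u : ℝ, (u:ℂ) + (ρ:ℂ)*Complex.I + Complex.I ≠ 0 := by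
    intro u hu
    have h2 : ((u:ℂ) + (ρ:ℂ)*Complex.I + Complex.I).im = ρ + 1 := by simp
    rw [hu] at h2; simp at h2; exact hρne1 h2.symm
  have hpf : ∀ u : ℝ, Complex.exp (Complex.I * ((u : ℂ) - ((w * ω : ℝ):ℂ) * Complex.I) * (m : ℂ)
      - (v : ℂ) ^ 2 * ((u : ℂ) - ((w * ω:ℝ):ℂ) * Complex.I) ^ 2 / 2)
    / (((u : ℂ) - ((w * ω:ℝ):ℂ) * Complex.I) *
        (((u : ℂ) - ((w * ω:ℝ):ℂ) * Complex.I) + Complex.I))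
      = (-Complex.I) * (Complex.exp (Exqu v ρ m u) / ((u:ℂ) + (ρ:ℂ)*Complex.I + ((0:ℝ):ℂ)*Complex.I))
        + Complex.I * (Complex.exp (Exqu v ρ m u) / ((u:ℂ) + (ρ:ℂ)*Complex.I + ((1:ℝ):ℂ)*Complex.I)) := by
    intro u
    rw [hxi u]
    have e0 : (u:ℂ) + (ρ:ℂ)*Complex.I + ((0:ℝ):ℂ)*Complex.I = (u:ℂ) + (ρ:ℂ)*Complex.I := by
      push_cast; ring
    have e1 : (u:ℂ) + (ρ:ℂ)*Complex.I + ((1:ℝ):ℂ)*Complex.I = (u:ℂ) + (ρ:ℂ)*Complex.I + Complex.I := by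
      push_cast; ring
    rw [e0, e1]
    rw [show Complex.I * ((u:ℂ) + (ρ:ℂ)*Complex.I) * (m:ℂ)
        - (v:ℂ)^2 * ((u:ℂ) + (ρ:ℂ)*Complex.I)^2 / 2 = Exqu v ρ m u from rfl]
    field_simp [hden0 u, hden1 u]
    ring_nf
    rw [hI2]
    ring
  have key : asianIntegral w ω m v
      = (-Complex.I) * (2 * Real.pi * Complex.I *
          ((w:ℝ) : ℂ) * ((Real.exp ((0:ℝ)*m + (0:ℝ)^2*v^2/2) * stdNormalCDF (w * (m + 0*v^2)/v) : ℝ) : ℂ))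
        + Complex.I * (2 * Real.pi * Complex.I *
          ((w:ℝ) : ℂ) * ((Real.exp ((1:ℝ)*m + (1:ℝ)^2*v^2/2) * stdNormalCDF (w * (m + 1*v^2)/v) : ℝ) : ℂ)) := by
    rw [asianIntegral]
    simp_rw [hpf]
    rw [integral_add (((integrable_pole m v ρ 0 hv hρne0)).const_mul _)
        (((integrable_pole m v ρ 1 hv hρne1)).const_mul _),
      integral_const_mul, integral_const_mul,
      pole_integral_w w hw m v ρ 0 hv hρ0, pole_integral_w w hw m v ρ 1 hv hρ1]
    ring
  rw [key]
  have hπ : (Real.pi : ℂ) ≠ 0 := by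
    norm_cast
    exact Real.pi_ne_zero
  have harg0 : w * (m + 0*v^2)/v = w * m / v := by ring
  have harg1 : w * (m + 1*v^2)/v = w * (m + v^2) / v := by ring
  rw [harg0, harg1]
  norm_num
  push_cast
  field_simp
  ring_nf
  rw [hI2]
  ring

/-- Gaussian reduction of the Asian-type contour integral to a Black–Scholes-type
formula, together with its specialization to the discretely monitored geometric
Asian price integral. -/
theorem stmt14 (w ω : ℝ) (hw : w = 1 ∨ w = -1)
    (hω₁ : w = 1 → 1 < ω) (hω₂ : w = -1 → 0 < ω) :
    (∀ m v : ℝ, 0 < v →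
      -(1 / (2 * Real.pi)) * asianIntegral w ω m v
        = (w : ℂ) * (Real.exp (m + v ^ 2 / 2) * stdNormalCDF (w * (m + v ^ 2) / v)
            - stdNormalCDF (w * m / v))) ∧
    (∀ S K σ r T T' t : ℝ, ∀ M : ℕ, 0 < S → 0 < K → 0 < σ → T' < T → 1 ≤ M →
      -((K : ℂ) * Real.exp (-r * (T - t)) / (2 * Real.pi)) *
          asianIntegral w ω (Real.log (S / K) + (1 / 2) * (r - σ ^ 2 / 2) * (T - T'))
            (Real.sqrt (σ ^ 2 * (T - T') * (2 * (M : ℝ) - 1) / (6 * (M : ℝ))))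
        = (w : ℂ) *
            ((S : ℂ) * Real.exp (-(r * (T - t)
                  - (r - σ ^ 2 / 2 + σ ^ 2 * (2 * (M : ℝ) - 1) / (6 * (M : ℝ)))
                    * (T - T') / 2)) *
                stdNormalCDF (w * ((Real.log (S / K) + (1 / 2) * (r - σ ^ 2 / 2) * (T - T'))
                    / Real.sqrt (σ ^ 2 * (T - T') * (2 * (M : ℝ) - 1) / (6 * (M : ℝ)))
                  + Real.sqrt (σ ^ 2 * (T - T') * (2 * (M : ℝ) - 1) / (6 * (M : ℝ)))))
              - (K : ℂ) * Real.exp (-r * (T - t)) *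
                stdNormalCDF (w * ((Real.log (S / K) + (1 / 2) * (r - σ ^ 2 / 2) * (T - T'))
                    / Real.sqrt (σ ^ 2 * (T - T') * (2 * (M : ℝ) - 1) / (6 * (M : ℝ))))))) := by
  constructor
  · exact fun m v hv => part1 w ω hw hω₁ hω₂ m v hv
  · intro S K σ r T T' t M hS hK hσ hT hM
    have hM1 : (1:ℝ) ≤ (M:ℝ) := by exact_mod_cast hM
    have h2M : (0:ℝ) < 2*(M:ℝ) - 1 := by linarith
    have hMpos : (0:ℝ) < (M:ℝ) := by linarith
    have hX : (0:ℝ) < σ ^ 2 * (T - T') * (2 * (M:ℝ) - 1) / (6 * (M:ℝ)) := by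
      apply div_pos
      · apply mul_pos (mul_pos (by positivity) (by linarith)) h2M
      · linarith
    set X : ℝ := σ ^ 2 * (T - T') * (2 * (M:ℝ) - 1) / (6 * (M:ℝ)) with hXdef
    set v : ℝ := Real.sqrt X with hvdef
    have hv : 0 < v := Real.sqrt_pos.mpr hX
    have hv2 : v ^ 2 = X := Real.sq_sqrt hX.le
    set m₀ : ℝ := Real.log (S / K) + (1 / 2) * (r - σ ^ 2 / 2) * (T - T') with hm₀
    have h := part1 w ω hw hω₁ hω₂ m₀ v hv
    have hstep : -((K : ℂ) * Real.exp (-r * (T - t)) / (2 * Real.pi)) * asianIntegral w ω m₀ v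
        = ((K : ℂ) * (Real.exp (-r * (T - t)) : ℝ)) * (-(1 / (2 * Real.pi)) * asianIntegral w ω m₀ v) := by
      ring
    rw [hstep, h]
    -- key real identity
    have hkey : K * Real.exp (-r * (T - t)) * Real.exp (m₀ + v ^ 2 / 2)
        = S * Real.exp (-(r * (T - t)
            - (r - σ ^ 2 / 2 + σ ^ 2 * (2 * (M : ℝ) - 1) / (6 * (M : ℝ))) * (T - T') / 2)) := by
      have hSK : Real.exp (Real.log (S / K)) = S / K := Real.exp_log (div_pos hS hK)
      rw [show m₀ + v ^ 2 / 2 = Real.log (S / K)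
          + ((1 / 2) * (r - σ ^ 2 / 2) * (T - T') + X / 2) by rw [hm₀, hv2]; ring]
      rw [Real.exp_add, hSK]
      rw [show K * Real.exp (-r * (T - t)) * (S / K * Real.exp ((1/2) * (r - σ^2/2) * (T - T') + X/2))
          = S * (K/K) * (Real.exp (-r*(T-t)) * Real.exp ((1/2)*(r - σ^2/2)*(T-T') + X/2)) from by ring]
      rw [div_self hK.ne', mul_one, ← Real.exp_add]
      congr 1
      rw [hXdef]
      ring
    -- CDF argument identities
    have hvne : v ≠ 0 := hv.ne'
    have harg1 : w * (m₀ + v ^ 2) / v = w * (m₀ / v + v) := by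
      have hq : m₀ / v + v = (m₀ + v ^ 2) / v := by
        field_simp
      rw [hq, mul_div_assoc]
    have harg2 : w * m₀ / v = w * (m₀ / v) := by ring
    rw [harg1, harg2]
    have hkeyC : (K : ℂ) * (Real.exp (-r * (T - t)) : ℝ) * (Real.exp (m₀ + v ^ 2 / 2) : ℝ)
        = (S : ℂ) * ((Real.exp (-(r * (T - t)
            - (r - σ ^ 2 / 2 + σ ^ 2 * (2 * (M : ℝ) - 1) / (6 * (M : ℝ))) * (T - T') / 2)) : ℝ)) := by
      exact_mod_cast congrArg (fun x : ℝ => (x:ℂ)) hkey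
    calc (K : ℂ) * (Real.exp (-r * (T - t)) : ℝ) *
          ((w : ℂ) * (Real.exp (m₀ + v ^ 2 / 2) * stdNormalCDF (w * (m₀ / v + v))
            - stdNormalCDF (w * (m₀ / v))))
        = (w : ℂ) * (((K : ℂ) * (Real.exp (-r * (T - t)) : ℝ) * (Real.exp (m₀ + v ^ 2 / 2) : ℝ))
              * (stdNormalCDF (w * (m₀ / v + v)) : ℝ)
            - (K : ℂ) * (Real.exp (-r * (T - t)) : ℝ) * (stdNormalCDF (w * (m₀ / v)) : ℝ)) := by
          ring
      _ = _ := by rw [hkeyC]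
end

section
/- (Continuous-monitoring limit of the geometric Asian price.) Let λ₋ < 0 < λ₊ and let ψ be an admissible characteristic exponent of order ν ∈ (0,2] and type [λ₋, λ₊]. Let w ∈ {−1, 1} and ω > 0 with −wω ∈ (λ₋, λ₊) and ω ≠ 1, let L ∈ ℝ and τ > 0, and for M ≥ 1 let I_M = ∫_{Im ξ = −wω} (1/(ξ(ξ+i))) exp( iξL − Σ_{j=1}^M (τ/M) ψ(ξ (M − j)/M) ) dξ. Then lim_{M→∞} I_M = ∫_{Im ξ = −wω} (1/(ξ(ξ+i))) exp( iξL − τ ∫_0^1 ψ(ξ(1 − y)) dy ) dξ. -/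
open MeasureTheory Real Complex ProbabilityTheory

structure IsAdmissibleCharExponent (lm lp ν : ℝ) (ψ : ℂ → ℂ) : Prop where
  lm_neg : lm < 0
  lp_pos : 0 < lp
  ν_pos : 0 < ν
  ν_le_two : ν ≤ 2
  continuous : ContinuousOn ψ {ζ : ℂ | lm ≤ ζ.im ∧ ζ.im ≤ lp}
  holomorphic : DifferentiableOn ℂ ψ {ζ : ℂ | lm < ζ.im ∧ ζ.im < lp}
  map_zero : ψ 0 = 0
  growth : ∃ c > 0, ∃ C ≥ 0, ∀ ζ : ℂ, lm ≤ ζ.im → ζ.im ≤ lp →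
    c * |ζ.re| ^ ν - C ≤ (ψ ζ).re

lemma riemann_sum_tendsto (g : ℝ → ℂ) (hg : Continuous g) :
    Filter.Tendsto (fun M : ℕ => ∑ k ∈ Finset.range M, ((M : ℂ))⁻¹ * g ((k : ℝ) / (M : ℝ)))
      Filter.atTop (nhds (∫ y in (0:ℝ)..1, g y)) := by
  rw [Metric.tendsto_atTop]
  intro ε hε
  have hUC : UniformContinuousOn g (Set.Icc (0:ℝ) 1) :=
    (isCompact_Icc).uniformContinuousOn_of_continuous hg.continuousOn
  rw [Metric.uniformContinuousOn_iff] at hUC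
  obtain ⟨δ, hδ, hδ'⟩ := hUC (ε/2) (by positivity)
  obtain ⟨N, hN⟩ := exists_nat_gt (1/δ)
  refine ⟨N + 1, fun M hM => ?_⟩
  have hM1 : 1 ≤ M := le_trans (Nat.le_add_left 1 N) hM
  have hMpos : (0:ℝ) < M := by exact_mod_cast hM1
  have hMδ : 1 / (M:ℝ) < δ := by
    rw [div_lt_iff₀ hMpos]
    have h1 : 1/δ < (M:ℝ) := lt_of_lt_of_le hN (by exact_mod_cast le_trans (Nat.le_succ N) hM)
    rw [div_lt_iff₀ hδ] at h1
    linarith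
  set a : ℕ → ℝ := fun k => (k:ℝ) / M with ha
  have hint : ∀ k < M, IntervalIntegrable g volume (a k) (a (k+1)) :=
    fun k _ => hg.intervalIntegrable _ _
  have hsplit : ∑ k ∈ Finset.range M, ∫ y in a k..a (k+1), g y = ∫ y in (a 0)..(a M), g y :=
    intervalIntegral.sum_integral_adjacent_intervals hint
  have ha0 : a 0 = 0 := by simp [ha]
  have haM : a M = 1 := by simp only [ha]; exact div_self hMpos.ne'
  rw [ha0, haM] at hsplit
  rw [dist_eq_norm, ← hsplit, ← Finset.sum_sub_distrib]
  have hterm : ∀ k ∈ Finset.range M,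
      ‖((M : ℂ))⁻¹ * g ((k : ℝ) / (M : ℝ)) - ∫ y in a k..a (k+1), g y‖ ≤ (ε/2) / M := by
    intro k hk
    have hkM : k < M := Finset.mem_range.mp hk
    have hconst : ((M : ℂ))⁻¹ * g ((k : ℝ) / (M : ℝ)) = ∫ _ in a k..a (k+1), g (a k) := by
      rw [intervalIntegral.integral_const]
      have : a (k+1) - a k = 1 / M := by simp only [ha]; push_cast; ring
      rw [this]
      rw [Complex.real_smul]
      push_cast
      ring
    rw [hconst, ← intervalIntegral.integral_sub (by exact intervalIntegrable_const)
      (hg.intervalIntegrable _ _)]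
    have hb : ∀ y ∈ Set.uIoc (a k) (a (k+1)), ‖g (a k) - g y‖ ≤ ε/2 := by
      intro y hy
      have hle : a k ≤ a (k+1) := by
        simp only [ha]
        gcongr
        exact_mod_cast Nat.le_succ k
      rw [Set.uIoc_of_le hle] at hy
      have hak : a k ∈ Set.Icc (0:ℝ) 1 := by
        constructor
        · positivity
        · rw [div_le_one hMpos]; exact_mod_cast hkM.le
      have hy1 : y ∈ Set.Icc (0:ℝ) 1 := by
        constructor
        · exact le_trans hak.1 hy.1.le
        · refine le_trans hy.2 ?_
          rw [div_le_one hMpos]; exact_mod_cast hkM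
      have hdist : dist (a k) y < δ := by
        rw [Real.dist_eq, abs_sub_comm, _root_.abs_of_nonneg (by linarith [hy.1.le])]
        have : y - a k ≤ a (k+1) - a k := by linarith [hy.2]
        have h2 : a (k+1) - a k = 1 / M := by simp only [ha]; push_cast; ring
        calc y - a k ≤ 1 / M := by rw [← h2]; exact this
          _ < δ := hMδ
      have := hδ' (a k) hak y hy1 hdist
      rw [dist_eq_norm] at this
      linarith
    calc ‖∫ y in a k..a (k+1), (g (a k) - g y)‖ ≤ (ε/2) * |a (k+1) - a k| :=
          intervalIntegral.norm_integral_le_of_norm_le_const hb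
      _ = (ε/2) / M := by
          have h2 : a (k+1) - a k = 1 / M := by simp only [ha]; push_cast; ring
          rw [h2, abs_of_pos (by positivity)]; ring
  calc ‖∑ k ∈ Finset.range M, (((M : ℂ))⁻¹ * g ((k : ℝ) / (M : ℝ)) - ∫ y in a k..a (k+1), g y)‖
      ≤ ∑ k ∈ Finset.range M, ‖((M : ℂ))⁻¹ * g ((k : ℝ) / (M : ℝ)) - ∫ y in a k..a (k+1), g y‖ :=
        norm_sum_le _ _
    _ ≤ ∑ _k ∈ Finset.range M, (ε/2) / M := Finset.sum_le_sum hterm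
    _ = ε / 2 := by rw [Finset.sum_const, Finset.card_range, nsmul_eq_mul]; field_simp
    _ < ε := by linarith

/-- Continuous-monitoring limit of the geometric Asian price integral. -/
theorem stmt15 (lm lp ν : ℝ) (ψ : ℂ → ℂ) (hψ : IsAdmissibleCharExponent lm lp ν ψ)
    (w ω : ℝ) (hw : w = 1 ∨ w = -1) (hω : 0 < ω)
    (hstrip : lm < -(w * ω) ∧ -(w * ω) < lp) (hω1 : ω ≠ 1)
    (L τ : ℝ) (hτ : 0 < τ) :
    Filter.Tendsto
      (fun M : ℕ =>
        ∫ u : ℝ,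
          (1 / (((u : ℂ) - (w * ω : ℝ) * Complex.I) *
              (((u : ℂ) - (w * ω : ℝ) * Complex.I) + Complex.I))) *
          Complex.exp (Complex.I * ((u : ℂ) - (w * ω : ℝ) * Complex.I) * (L : ℂ)
            - ∑ j ∈ Finset.Icc 1 M, ((τ / (M : ℝ) : ℝ) : ℂ) *
                ψ (((u : ℂ) - (w * ω : ℝ) * Complex.I) *
                  ((((M - j : ℕ) : ℝ) / (M : ℝ) : ℝ) : ℂ))))
      Filter.atTop
      (nhds (∫ u : ℝ,
        (1 / (((u : ℂ) - (w * ω : ℝ) * Complex.I) *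
            (((u : ℂ) - (w * ω : ℝ) * Complex.I) + Complex.I))) *
        Complex.exp (Complex.I * ((u : ℂ) - (w * ω : ℝ) * Complex.I) * (L : ℂ)
          - (τ : ℂ) * ∫ y in (0 : ℝ)..1,
              ψ (((u : ℂ) - (w * ω : ℝ) * Complex.I) * (((1 - y : ℝ) : ℝ) : ℂ))))) := by
  obtain ⟨c, hc, C, hC, hgrow⟩ := hψ.growth
  have hbne : w * ω ≠ 0 := by
    rcases hw with h | h <;> subst h <;> simp [hω.ne', neg_eq_zero]
  have hδpos : (0:ℝ) < |1 - w * ω| := by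
    rcases hw with h | h <;> subst h
    · rw [abs_pos]
      intro h; apply hω1; linarith [sub_eq_zero.mp h]
    · rw [abs_pos]
      intro h; nlinarith [sub_eq_zero.mp h]
  have hδne : 1 - w * ω ≠ 0 := abs_ne_zero.mp (ne_of_gt hδpos)
  set m : ℝ := min ω |1 - w * ω| with hm_def
  have hm : 0 < m := lt_min hω hδpos
  have hstx : ∀ x : ℝ, 0 ≤ x → x ≤ 1 →
      lm ≤ -(w * ω) * x ∧ -(w * ω) * x ≤ lp := by
    intro x h0 h1
    constructor
    · rcases le_or_gt 0 (-(w*ω)) with h | h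
      · nlinarith [hψ.lm_neg]
      · nlinarith [hstrip.1]
    · rcases le_or_gt 0 (-(w*ω)) with h | h
      · nlinarith [hstrip.2]
      · nlinarith [hψ.lp_pos]
  have him : ∀ (u x : ℝ),
      ((((u : ℂ) - ((w * ω : ℝ) : ℂ) * Complex.I)) * ((x : ℝ) : ℂ)).im = -(w * ω) * x := by
    intro u x
    simp only [Complex.mul_im, Complex.sub_im, Complex.sub_re, Complex.mul_re, Complex.mul_im,
      Complex.I_re, Complex.I_im, Complex.ofReal_re, Complex.ofReal_im]
    ring
  have hcontψ : ∀ t : ℝ, 0 ≤ t → t ≤ 1 →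
      Continuous (fun u : ℝ =>
        ψ (((u : ℂ) - ((w * ω : ℝ) : ℂ) * Complex.I) * ((t : ℝ) : ℂ))) := by
    intro t h0 h1
    apply hψ.continuous.comp_continuous
    · exact (Complex.continuous_ofReal.sub continuous_const).mul continuous_const
    · intro u
      refine ⟨?_, ?_⟩
      · rw [him]; exact (hstx t h0 h1).1
      · rw [him]; exact (hstx t h0 h1).2
  have ht01 : ∀ (M j : ℕ), 0 ≤ ((M - j : ℕ) : ℝ) / (M : ℝ) ∧ ((M - j : ℕ) : ℝ) / (M : ℝ) ≤ 1 := by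
    intro M j
    constructor
    · positivity
    · rcases Nat.eq_zero_or_pos M with h | h
      · simp [h]
      · rw [div_le_one (by exact_mod_cast h)]
        exact_mod_cast Nat.sub_le M j
  have hz1ne : ∀ u : ℝ, ((u : ℂ) - ((w * ω : ℝ) : ℂ) * Complex.I) ≠ 0 := by
    intro u h
    have h2 := congrArg Complex.im h
    simp only [Complex.sub_im, Complex.mul_im, Complex.I_re, Complex.I_im, Complex.ofReal_re,
      Complex.ofReal_im, Complex.zero_im] at h2
    apply hbne
    linarith
  have hz2ne : ∀ u : ℝ, ((u : ℂ) - ((w * ω : ℝ) : ℂ) * Complex.I) + Complex.I ≠ 0 := by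
    intro u h
    have h2 := congrArg Complex.im h
    simp only [Complex.add_im, Complex.sub_im, Complex.mul_im, Complex.I_re, Complex.I_im,
      Complex.ofReal_re, Complex.ofReal_im, Complex.zero_im] at h2
    apply hδne
    linarith
  have hden : ∀ u : ℝ, u ^ 2 + m ^ 2 ≤
      ‖(u : ℂ) - ((w * ω : ℝ) : ℂ) * Complex.I‖ *
      ‖((u : ℂ) - ((w * ω : ℝ) : ℂ) * Complex.I) + Complex.I‖ := by
    intro u
    have h1 : ‖(u : ℂ) - ((w * ω : ℝ) : ℂ) * Complex.I‖
        = Real.sqrt (u ^ 2 + (w * ω) ^ 2) := by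
      rw [Complex.norm_def, Complex.normSq_apply]
      congr 1
      simp only [Complex.sub_re, Complex.sub_im, Complex.mul_re, Complex.mul_im, Complex.I_re,
        Complex.I_im, Complex.ofReal_re, Complex.ofReal_im]
      ring
    have h2 : ‖((u : ℂ) - ((w * ω : ℝ) : ℂ) * Complex.I) + Complex.I‖
        = Real.sqrt (u ^ 2 + (1 - w * ω) ^ 2) := by
      rw [Complex.norm_def, Complex.normSq_apply]
      congr 1
      simp only [Complex.add_re, Complex.add_im, Complex.sub_re, Complex.sub_im, Complex.mul_re,
        Complex.mul_im, Complex.I_re, Complex.I_im, Complex.ofReal_re, Complex.ofReal_im]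
      ring
    rw [h1, h2]
    have hω2 : m ^ 2 ≤ (w * ω) ^ 2 := by
      have h3 : m ≤ ω := min_le_left _ _
      have h4 : (w * ω)^2 = ω ^ 2 := by rcases hw with h | h <;> subst h <;> ring
      nlinarith
    have hδ2 : m ^ 2 ≤ (1 - w * ω) ^ 2 := by
      have h3 : m ≤ |1 - w * ω| := min_le_right _ _
      nlinarith [abs_nonneg (1 - w*ω), _root_.sq_abs (1 - w*ω)]
    calc u ^ 2 + m ^ 2 = Real.sqrt (u^2 + m^2) * Real.sqrt (u^2 + m^2) := by
          rw [Real.mul_self_sqrt (by positivity)]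
      _ ≤ _ := by
          apply mul_le_mul (Real.sqrt_le_sqrt (by nlinarith)) (Real.sqrt_le_sqrt (by nlinarith))
            (by positivity) (by positivity)
  have hpref : ∀ u : ℝ, ‖(1 / (((u : ℂ) - ((w * ω : ℝ) : ℂ) * Complex.I) *
      (((u : ℂ) - ((w * ω : ℝ) : ℂ) * Complex.I) + Complex.I)))‖ ≤ (u ^ 2 + m ^ 2)⁻¹ := by
    intro u
    rw [norm_div, norm_one, norm_mul, one_div]
    rw [inv_le_inv₀ (lt_of_lt_of_le (by positivity) (hden u)) (by positivity)]
    exact hden u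
  apply MeasureTheory.tendsto_integral_of_dominated_convergence
    (bound := fun u : ℝ => (u ^ 2 + m ^ 2)⁻¹ * Real.exp (w * ω * L + C * τ))
  · -- measurability
    intro n
    apply Continuous.aestronglyMeasurable
    apply Continuous.mul
    · apply Continuous.div continuous_const
      · exact ((Complex.continuous_ofReal.sub continuous_const).mul
          ((Complex.continuous_ofReal.sub continuous_const).add continuous_const))
      · intro u; exact mul_ne_zero (hz1ne u) (hz2ne u)
    · apply Complex.continuous_exp.comp
      apply Continuous.sub
      · exact (continuous_const.mul (Complex.continuous_ofReal.sub continuous_const)).mul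
          continuous_const
      · apply continuous_finset_sum
        intro j _
        exact continuous_const.mul (hcontψ _ (ht01 n j).1 (ht01 n j).2)
  · -- integrability of the bound
    apply Integrable.mul_const
    set K : ℝ := max 1 (m ^ 2)⁻¹ with hK
    have hK1 : (1:ℝ) ≤ K := le_max_left _ _
    have hK2 : (m ^ 2)⁻¹ ≤ K := le_max_right _ _
    have hgi : Integrable (fun u : ℝ => K * (1 + u ^ 2)⁻¹) := integrable_inv_one_add_sq.const_mul K
    apply hgi.mono'
    · apply Continuous.aestronglyMeasurable
      apply Continuous.inv₀ ((continuous_pow 2).add continuous_const)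
      intro u; have : (0:ℝ) < u ^ 2 + m ^ 2 := by positivity
      exact this.ne'
    · apply Filter.Eventually.of_forall
      intro u
      rw [Real.norm_eq_abs, _root_.abs_of_nonneg (by positivity)]
      rw [inv_le_iff_one_le_mul₀ (by positivity)]
      have hKm : 1 ≤ K * m ^ 2 := by
        rw [← inv_mul_cancel₀ (by positivity : ((m:ℝ)^2) ≠ 0)]
        exact mul_le_mul_of_nonneg_right hK2 (by positivity)
      have h1u : (0:ℝ) < 1 + u ^ 2 := by positivity
      calc (1:ℝ) = (1 + u^2)⁻¹ * (1 + u^2) := by rw [inv_mul_cancel₀ h1u.ne']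
        _ ≤ K * (1 + u ^ 2)⁻¹ * (u ^ 2 + m ^ 2) := by
            rw [mul_comm K _, mul_assoc]
            apply mul_le_mul_of_nonneg_left _ (by positivity)
            nlinarith
  · -- norm bound
    intro n
    apply Filter.Eventually.of_forall
    intro u
    rw [norm_mul]
    apply mul_le_mul (hpref u) _ (norm_nonneg _) (by positivity)
    rw [Complex.norm_exp]
    apply Real.exp_le_exp.mpr
    rw [Complex.sub_re]
    have hre1 : (Complex.I * ((u : ℂ) - ((w * ω : ℝ) : ℂ) * Complex.I) * (L : ℂ)).re
        = w * ω * L := by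
      simp only [Complex.mul_re, Complex.mul_im, Complex.sub_re, Complex.sub_im, Complex.I_re,
        Complex.I_im, Complex.ofReal_re, Complex.ofReal_im]
      ring
    rw [hre1, Complex.re_sum]
    have hterm : ∀ j ∈ Finset.Icc 1 n,
        -(C * (τ / n)) ≤ ((((τ / (n : ℝ) : ℝ) : ℂ)) *
          ψ (((u : ℂ) - ((w * ω : ℝ) : ℂ) * Complex.I) *
            ((((n - j : ℕ) : ℝ) / (n : ℝ) : ℝ) : ℂ))).re := by
      intro j _
      rw [Complex.re_ofReal_mul]
      have hmem := hstx _ (ht01 n j).1 (ht01 n j).2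
      have hg := hgrow (((u : ℂ) - ((w * ω : ℝ) : ℂ) * Complex.I) *
        ((((n - j : ℕ) : ℝ) / (n : ℝ) : ℝ) : ℂ))
        (by rw [him]; exact hmem.1) (by rw [him]; exact hmem.2)
      have h0 : (0:ℝ) ≤ c * |((((u : ℂ) - ((w * ω : ℝ) : ℂ) * Complex.I) *
          ((((n - j : ℕ) : ℝ) / (n : ℝ) : ℝ) : ℂ))).re| ^ ν :=
        mul_nonneg hc.le (Real.rpow_nonneg (abs_nonneg _) ν)
      have hψre : -C ≤ (ψ (((u : ℂ) - ((w * ω : ℝ) : ℂ) * Complex.I) *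
          ((((n - j : ℕ) : ℝ) / (n : ℝ) : ℝ) : ℂ))).re := by linarith
      have hτn : (0:ℝ) ≤ τ / n := by positivity
      nlinarith [mul_le_mul_of_nonneg_left hψre hτn]
    have hsum := Finset.sum_le_sum hterm
    rw [Finset.sum_const, Nat.card_Icc, Nat.add_sub_cancel, nsmul_eq_mul] at hsum
    have hfin : -(C * τ) ≤ (n:ℝ) * -(C * (τ / n)) := by
      rcases Nat.eq_zero_or_pos n with h | h
      · simp [h]
        positivity
      · have hne : (n:ℝ) ≠ 0 := by exact_mod_cast h.ne'
        have heq : (n:ℝ) * -(C * (τ / n)) = -(C * τ) := by field_simp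
        rw [heq]
    linarith
  · -- pointwise limit
    apply Filter.Eventually.of_forall
    intro u
    set ξ : ℂ := (u : ℂ) - ((w * ω : ℝ) : ℂ) * Complex.I with hξ
    set g : ℝ → ℂ := fun y => ψ (ξ * ((max 0 (min 1 y) : ℝ) : ℂ)) with hg
    have hgcont : Continuous g := by
      apply hψ.continuous.comp_continuous
      · exact continuous_const.mul (Complex.continuous_ofReal.comp
          (continuous_const.max (continuous_const.min continuous_id)))
      · intro y
        have h0 : (0:ℝ) ≤ max 0 (min 1 y) := le_max_left _ _
        have h1 : max 0 (min 1 y) ≤ 1 := max_le zero_le_one (min_le_left _ _)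
        refine ⟨?_, ?_⟩
        · rw [hξ, him]; exact (hstx _ h0 h1).1
        · rw [hξ, him]; exact (hstx _ h0 h1).2
    have hriem := Filter.Tendsto.const_mul (τ : ℂ) (riemann_sum_tendsto g hgcont)
    have hSeq : ∀ M : ℕ, (∑ j ∈ Finset.Icc 1 M, ((τ / (M : ℝ) : ℝ) : ℂ) *
        ψ (ξ * ((((M - j : ℕ) : ℝ) / (M : ℝ) : ℝ) : ℂ)))
        = (τ : ℂ) * ∑ k ∈ Finset.range M, ((M : ℂ))⁻¹ * g ((k : ℝ) / (M : ℝ)) := by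
      intro M
      rw [Finset.mul_sum, ← Finset.Ico_add_one_right_eq_Icc, Finset.sum_Ico_eq_sum_range]
      simp only [Nat.add_sub_cancel]
      rw [← Finset.sum_range_reflect (fun k => (τ:ℂ) * (((M:ℂ))⁻¹ * g ((k:ℝ)/(M:ℝ)))) M]
      apply Finset.sum_congr rfl
      intro i hi
      have hiM : i < M := Finset.mem_range.mp hi
      have hnn : M - (1 + i) = M - 1 - i := by omega
      have hx1 := (ht01 M (1+i)).2
      have hx0 := (ht01 M (1+i)).1
      rw [hnn] at hx1 hx0
      simp only [hg, min_eq_right hx1, max_eq_right hx0]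
      rw [hnn]
      rw [show ((τ / (M : ℝ) : ℝ) : ℂ) = (τ:ℂ) * ((M:ℂ))⁻¹ by push_cast; ring]
      ring
    have hS : Filter.Tendsto (fun M : ℕ => ∑ j ∈ Finset.Icc 1 M, ((τ / (M : ℝ) : ℝ) : ℂ) *
        ψ (ξ * ((((M - j : ℕ) : ℝ) / (M : ℝ) : ℝ) : ℂ))) Filter.atTop
        (nhds ((τ:ℂ) * ∫ y in (0:ℝ)..1, g y)) :=
      Filter.Tendsto.congr (fun M => (hSeq M).symm) hriem
    have hexp := ((tendsto_const_nhds (x := Complex.I * ξ * (L : ℂ))).sub hS).cexp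
    have hfinal := Filter.Tendsto.const_mul (1 / (ξ * (ξ + Complex.I))) hexp
    have e1 : (∫ y in (0:ℝ)..1, ψ (ξ * (((1 - y : ℝ) : ℝ) : ℂ)))
        = ∫ y in (0:ℝ)..1, g y := by
      have e0 : (∫ y in (0:ℝ)..1, ψ (ξ * (((1 - y : ℝ) : ℝ) : ℂ)))
          = ∫ y in (0:ℝ)..1, g (1 - y) := by
        apply intervalIntegral.integral_congr
        intro y hy
        rw [Set.uIcc_of_le zero_le_one] at hy
        have h0 : (0:ℝ) ≤ 1 - y := by linarith [hy.2]
        have h1 : 1 - y ≤ 1 := by linarith [hy.1]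
        simp only [hg, min_eq_right h1, max_eq_right h0]
      rw [e0, intervalIntegral.integral_comp_sub_left g 1]
      norm_num
    rw [← e1] at hfinal
    exact hfinal
end
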